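/- arXiv:1511.02756 — 8 statements merged into one kernel-verified Lean document; each statement's English description precedes it below -/
import Mathlib

section
/- For α ≥ 4 and y > 1, the inequality (y^α - 1)/(y - 1) ≥ α + (1/2)α(α-1)(y-1) + (1/6)α(α-1)(α-2)(y-1)^2 holds. -/
private lemma aux_nonneg (f f' : ℝ → ℝ) (hd : ∀ x, HasDerivAt f (f' x) x)
    (h1 : f 1 = 0) (hp : ∀ x, 1 ≤ x → 0 ≤ f' x) : ∀ y, 1 ≤ y → 0 ≤ f y := by
  intro y hy
  have hmono : MonotoneOn f (Set.Ici 1) := by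
    apply monotoneOn_of_deriv_nonneg (convex_Ici 1)
      (fun x _ => (hd x).continuousAt.continuousWithinAt)
      (fun x hx => (hd x).differentiableAt.differentiableWithinAt)
    intro x hx
    rw [interior_Ici] at hx
    rw [(hd x).deriv]
    exact hp x hx.le
  have := hmono (Set.self_mem_Ici) hy hy
  rwa [h1] at this

private lemma rpow_ge_one {t p : ℝ} (ht : 1 ≤ t) (hp : 0 ≤ p) : 1 ≤ t ^ p := by
  calc (1:ℝ) = 1 ^ p := (Real.one_rpow p).symm
  _ ≤ t ^ p := Real.rpow_le_rpow zero_le_one ht hp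

theorem stmt_0 (α y : ℝ) (hα : 4 ≤ α) (hy : 1 < y) :
    (y ^ α - 1) / (y - 1) ≥
      α + (1/2) * α * (α - 1) * (y - 1) + (1/6) * α * (α - 1) * (α - 2) * (y - 1) ^ 2 := by
  have h1 : (1:ℝ) ≤ α - 3 := by linarith
  have h2 : (1:ℝ) ≤ α - 2 := by linarith
  have h3 : (1:ℝ) ≤ α - 1 := by linarith
  have h4 : (1:ℝ) ≤ α := by linarith
  -- level 1
  have hf1 : ∀ t, 1 ≤ t → 0 ≤ t ^ (α-2) - 1 - (α-2)*(t-1) := by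
    apply aux_nonneg _ (fun t => (α-2) * t ^ (α-2-1) - (α-2))
    · intro x
      have h := (Real.hasDerivAt_rpow_const (x := x) (p := α-2) (Or.inr h2))
      have := ((h.sub_const 1).sub (((hasDerivAt_id x).sub_const 1).const_mul (α-2)))
      exact this.congr_deriv (by ring)
    · simp
    · intro x hx
      have : 1 ≤ x ^ (α-2-1) := rpow_ge_one hx (by linarith)
      nlinarith
  -- level 2
  have hf2 : ∀ t, 1 ≤ t → 0 ≤ t ^ (α-1) - 1 - (α-1)*(t-1) - (1/2)*(α-1)*(α-2)*(t-1)^2 := by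
    apply aux_nonneg _
      (fun t => (α-1) * (t ^ (α-1-1) - 1 - (α-2)*(t-1)))
    · intro x
      have h := (Real.hasDerivAt_rpow_const (x := x) (p := α-1) (Or.inr h3))
      have hq : HasDerivAt (fun t : ℝ => (t-1)^2) (2*(x-1)) x := by
        have := ((hasDerivAt_id x).sub_const 1).pow 2
        exact this.congr_deriv (by simp only [id_eq]; ring)
      have := (((h.sub_const 1).sub
        (((hasDerivAt_id x).sub_const 1).const_mul (α-1))).sub (hq.const_mul ((1/2)*(α-1)*(α-2))))
      exact this.congr_deriv (by ring)
    · simp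
    · intro x hx
      have := hf1 x hx
      have he : α - 1 - 1 = α - 2 := by ring
      rw [he]
      nlinarith
  -- level 3
  have hf3 : 0 ≤ y ^ α - 1 - α*(y-1) - (1/2)*α*(α-1)*(y-1)^2 - (1/6)*α*(α-1)*(α-2)*(y-1)^3 := by
    apply aux_nonneg _
      (fun t => α * (t ^ (α-1) - 1 - (α-1)*(t-1) - (1/2)*(α-1)*(α-2)*(t-1)^2)) _ _ _ y hy.le
    · intro x
      have h := (Real.hasDerivAt_rpow_const (x := x) (p := α) (Or.inr h4))
      have hq2 : HasDerivAt (fun t : ℝ => (t-1)^2) (2*(x-1)) x := by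
        have := ((hasDerivAt_id x).sub_const 1).pow 2
        exact this.congr_deriv (by simp only [id_eq]; ring)
      have hq3 : HasDerivAt (fun t : ℝ => (t-1)^3) (3*(x-1)^2) x := by
        have := ((hasDerivAt_id x).sub_const 1).pow 3
        exact this.congr_deriv (by simp only [id_eq]; ring)
      have := ((((h.sub_const 1).sub
        (((hasDerivAt_id x).sub_const 1).const_mul α)).sub
        (hq2.const_mul ((1/2)*α*(α-1)))).sub (hq3.const_mul ((1/6)*α*(α-1)*(α-2))))
      exact this.congr_deriv (by ring)
    · simp
    · intro x hx
      have := hf2 x hx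
      nlinarith
  rw [ge_iff_le, le_div_iff₀ (by linarith : (0:ℝ) < y - 1)]
  nlinarith [hf3]
end

section
/- For any real α ≥ 5 and any real y > 1, the quantity g(y) := ((y^α - 1)/(y - 1))^2 - α((α-1)y^α + 1) is strictly positive. -/
open Real Set

noncomputable def P0 (a y : ℝ) : ℝ :=
  y ^ (2*a) - a*(a-1)*y^(a+2) + 2*a*(a-1)*y^(a+1) - (a^2-a+2)*y^a - a*y^(2:ℝ) + 2*a*y + (1-a)

noncomputable def P1 (a y : ℝ) : ℝ :=
  2*a*y^(2*a-1) - a*(a-1)*(a+2)*y^(a+1) + 2*a*(a-1)*(a+1)*y^a - a*(a^2-a+2)*y^(a-1)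
    - 2*a*y + 2*a

noncomputable def P2 (a y : ℝ) : ℝ :=
  2*a*(2*a-1)*y^(2*a-2) - a*(a-1)*(a+1)*(a+2)*y^a + 2*a^2*(a-1)*(a+1)*y^(a-1)
    - a*(a-1)*(a^2-a+2)*y^(a-2) - 2*a

noncomputable def P3 (a y : ℝ) : ℝ :=
  2*a*(2*a-1)*(2*a-2)*y^(2*a-3) - a^2*(a-1)*(a+1)*(a+2)*y^(a-1) + 2*a^2*(a-1)^2*(a+1)*y^(a-2)
    - a*(a-1)*(a-2)*(a^2-a+2)*y^(a-3)

noncomputable def P4 (a y : ℝ) : ℝ :=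
  2*a*(2*a-1)*(2*a-2)*(2*a-3)*y^(2*a-4) - a^2*(a-1)^2*(a+1)*(a+2)*y^(a-2)
    + 2*a^2*(a-1)^2*(a+1)*(a-2)*y^(a-3) - a*(a-1)*(a-2)*(a-3)*(a^2-a+2)*y^(a-4)

noncomputable def Q0 (a y : ℝ) : ℝ :=
  2*(2*a-1)*(2*a-3)*y^a - (a*(a-1)*(a+1)*(a+2)/2)*y^(2:ℝ) + a*(a-1)*(a+1)*(a-2)*y
    - (a-2)*(a-3)*(a^2-a+2)/2

noncomputable def Q1 (a y : ℝ) : ℝ :=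
  2*a*(2*a-1)*(2*a-3)*y^(a-1) - a*(a-1)*(a+1)*(a+2)*y + a*(a-1)*(a+1)*(a-2)

noncomputable def Q2 (a y : ℝ) : ℝ :=
  2*a*(a-1)*(2*a-1)*(2*a-3)*y^(a-2) - a*(a-1)*(a+1)*(a+2)

lemma hasDerivAt_mono (c p q : ℝ) {x : ℝ} (hx : 0 < x) (h : p - 1 = q) :
    HasDerivAt (fun y : ℝ => c * y ^ p) (c * p * x ^ q) x := by
  subst h
  simpa [mul_assoc] using (Real.hasDerivAt_rpow_const (p := p) (Or.inl hx.ne')).const_mul c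

lemma hd0 (a : ℝ) : ∀ x : ℝ, 0 < x → HasDerivAt (P0 a) (P1 a x) x := by
  intro x hx
  have h1 : HasDerivAt (fun y : ℝ => y ^ (2*a)) ((2*a) * x ^ (2*a-1)) x :=
    Real.hasDerivAt_rpow_const (Or.inl hx.ne')
  have h2 := hasDerivAt_mono (a*(a-1)) (a+2) (a+1) hx (by ring)
  have h3 := hasDerivAt_mono (2*a*(a-1)) (a+1) a hx (by ring)
  have h4 := hasDerivAt_mono (a^2-a+2) a (a-1) hx (by ring)
  have h5 := hasDerivAt_mono a 2 1 hx (by norm_num)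
  rw [Real.rpow_one] at h5
  have h6 := (hasDerivAt_id x).const_mul (2*a)
  have h7 := hasDerivAt_const x (1-a)
  have H := (((((h1.sub h2).add h3).sub h4).sub h5).add h6).add h7
  unfold P0 P1
  convert H using 1
  all_goals first | rfl | ring

lemma hd1 (a : ℝ) : ∀ x : ℝ, 0 < x → HasDerivAt (P1 a) (P2 a x) x := by
  intro x hx
  have h1 := hasDerivAt_mono (2*a) (2*a-1) (2*a-2) hx (by ring)
  have h2 := hasDerivAt_mono (a*(a-1)*(a+2)) (a+1) a hx (by ring)
  have h3 := hasDerivAt_mono (2*a*(a-1)*(a+1)) a (a-1) hx (by ring)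
  have h4 := hasDerivAt_mono (a*(a^2-a+2)) (a-1) (a-2) hx (by ring)
  have h5 := (hasDerivAt_id x).const_mul (2*a)
  have h6 := hasDerivAt_const x (2*a)
  have H := ((((h1.sub h2).add h3).sub h4).sub h5).add h6
  unfold P1 P2
  convert H using 1
  all_goals first | rfl | ring

lemma hd2 (a : ℝ) : ∀ x : ℝ, 0 < x → HasDerivAt (P2 a) (P3 a x) x := by
  intro x hx
  have h1 := hasDerivAt_mono (2*a*(2*a-1)) (2*a-2) (2*a-3) hx (by ring)
  have h2 := hasDerivAt_mono (a*(a-1)*(a+1)*(a+2)) a (a-1) hx (by ring)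
  have h3 := hasDerivAt_mono (2*a^2*(a-1)*(a+1)) (a-1) (a-2) hx (by ring)
  have h4 := hasDerivAt_mono (a*(a-1)*(a^2-a+2)) (a-2) (a-3) hx (by ring)
  have h5 := hasDerivAt_const x (2*a)
  have H := (((h1.sub h2).add h3).sub h4).sub h5
  unfold P2 P3
  convert H using 1
  all_goals first | rfl | ring

lemma hd3 (a : ℝ) : ∀ x : ℝ, 0 < x → HasDerivAt (P3 a) (P4 a x) x := by
  intro x hx
  have h1 := hasDerivAt_mono (2*a*(2*a-1)*(2*a-2)) (2*a-3) (2*a-4) hx (by ring)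
  have h2 := hasDerivAt_mono (a^2*(a-1)*(a+1)*(a+2)) (a-1) (a-2) hx (by ring)
  have h3 := hasDerivAt_mono (2*a^2*(a-1)^2*(a+1)) (a-2) (a-3) hx (by ring)
  have h4 := hasDerivAt_mono (a*(a-1)*(a-2)*(a^2-a+2)) (a-3) (a-4) hx (by ring)
  have H := ((h1.sub h2).add h3).sub h4
  unfold P3 P4
  convert H using 1
  all_goals first | rfl | ring

lemma hdQ0 (a : ℝ) : ∀ x : ℝ, 0 < x → HasDerivAt (Q0 a) (Q1 a x) x := by
  intro x hx
  have h1 := hasDerivAt_mono (2*(2*a-1)*(2*a-3)) a (a-1) hx (by ring)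
  have h2 := hasDerivAt_mono (a*(a-1)*(a+1)*(a+2)/2) 2 1 hx (by norm_num)
  rw [Real.rpow_one] at h2
  have h3 := (hasDerivAt_id x).const_mul (a*(a-1)*(a+1)*(a-2))
  have h4 := hasDerivAt_const x ((a-2)*(a-3)*(a^2-a+2)/2)
  have H := ((h1.sub h2).add h3).sub h4
  unfold Q0 Q1
  convert H using 1
  all_goals first | rfl | ring

lemma hdQ1 (a : ℝ) : ∀ x : ℝ, 0 < x → HasDerivAt (Q1 a) (Q2 a x) x := by
  intro x hx
  have h1 := hasDerivAt_mono (2*a*(2*a-1)*(2*a-3)) (a-1) (a-2) hx (by ring)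
  have h2 := (hasDerivAt_id x).const_mul (a*(a-1)*(a+1)*(a+2))
  have h3 := hasDerivAt_const x (a*(a-1)*(a+1)*(a-2))
  have H := (h1.sub h2).add h3
  unfold Q1 Q2
  convert H using 1
  all_goals first | rfl | ring

/-- generic: if `f' ≥ 0` on `(1,∞)` then `f` is monotone on `[1,∞)`. -/
lemma mono_aux (f f' : ℝ → ℝ) (hd : ∀ x : ℝ, 0 < x → HasDerivAt f (f' x) x)
    (hp : ∀ x : ℝ, 1 < x → 0 ≤ f' x) : MonotoneOn f (Set.Ici 1) := by
  apply monotoneOn_of_deriv_nonneg (convex_Ici 1)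
  · exact fun x hx =>
      (hd x (lt_of_lt_of_le one_pos hx)).differentiableAt.continuousAt.continuousWithinAt
  · intro x hx
    rw [interior_Ici] at hx
    exact ((hd x (lt_trans one_pos hx)).differentiableAt).differentiableWithinAt
  · intro x hx
    rw [interior_Ici] at hx
    rw [(hd x (lt_trans one_pos hx)).deriv]
    exact hp x hx

/-- generic: if `f 1 ≥ 0` and `f' > 0` on `(1,∞)` then `f > 0` on `(1,∞)`. -/
lemma pos_aux (f f' : ℝ → ℝ) (hd : ∀ x : ℝ, 0 < x → HasDerivAt f (f' x) x)
    (h1 : 0 ≤ f 1) (hp : ∀ x : ℝ, 1 < x → 0 < f' x) {y : ℝ} (hy : 1 < y) : 0 < f y := by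
  have hmono : StrictMonoOn f (Set.Ici 1) := by
    apply strictMonoOn_of_deriv_pos (convex_Ici 1)
    · exact fun x hx =>
        (hd x (lt_of_lt_of_le one_pos hx)).differentiableAt.continuousAt.continuousWithinAt
    · intro x hx
      rw [interior_Ici] at hx
      rw [(hd x (lt_trans one_pos hx)).deriv]
      exact hp x hx
  have := hmono Set.self_mem_Ici (le_of_lt hy) hy
  linarith

lemma Q2_nonneg (a : ℝ) (ha : 5 ≤ a) : ∀ x : ℝ, 1 < x → 0 ≤ Q2 a x := by
  intro x hx
  have ht : 1 ≤ x ^ (a-2) := Real.one_le_rpow (le_of_lt hx) (by linarith)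
  have hc : (0:ℝ) ≤ 2*a*(a-1)*(2*a-1)*(2*a-3) := by
    have c1 : (0:ℝ) < 2*a := by linarith
    have c2 : (0:ℝ) < a-1 := by linarith
    have c3 : (0:ℝ) < 2*a-1 := by linarith
    have c4 : (0:ℝ) < 2*a-3 := by linarith
    positivity
  have h1 : 0 ≤ 2*a*(a-1)*(2*a-1)*(2*a-3) * (x^(a-2) - 1) :=
    mul_nonneg hc (by linarith)
  unfold Q2
  nlinarith [sq_nonneg a, sq_nonneg (a-5)]

lemma Q1_pos (a : ℝ) (ha : 5 ≤ a) : ∀ x : ℝ, 1 < x → 0 < Q1 a x := by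
  intro x hx
  have hQ1one : 0 < Q1 a 1 := by
    unfold Q1
    rw [Real.one_rpow]
    nlinarith [sq_nonneg (a-5)]
  have hmono := mono_aux (Q1 a) (Q2 a) (hdQ1 a) (Q2_nonneg a ha)
  have := hmono Set.self_mem_Ici (le_of_lt hx) (le_of_lt hx)
  linarith

lemma Q0_pos (a : ℝ) (ha : 5 ≤ a) : ∀ x : ℝ, 1 < x → 0 < Q0 a x := by
  intro x hx
  refine pos_aux (Q0 a) (Q1 a) (hdQ0 a) ?_ (Q1_pos a ha) hx
  unfold Q0
  rw [Real.one_rpow, Real.one_rpow]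
  nlinarith [sq_nonneg (a-5)]

lemma P4_eq (a : ℝ) : ∀ x : ℝ, 0 < x → P4 a x = 2*a*(a-1)*x^(a-4)*Q0 a x := by
  intro x hx
  have e1 : x^(2*a-4) = x^(a-4) * x^a := by
    rw [← Real.rpow_add hx]; congr 1; ring
  have e2 : x^(a-2) = x^(a-4) * x^(2:ℝ) := by
    rw [← Real.rpow_add hx]; congr 1; ring
  have e3 : x^(a-3) = x^(a-4) * x := by
    rw [show a-3 = (a-4)+1 by ring, Real.rpow_add hx, Real.rpow_one]
  unfold P4 Q0
  rw [e1, e2, e3]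
  ring

lemma P4_pos (a : ℝ) (ha : 5 ≤ a) : ∀ x : ℝ, 1 < x → 0 < P4 a x := by
  intro x hx
  have hx0 : (0:ℝ) < x := lt_trans one_pos hx
  rw [P4_eq a x hx0]
  have : (0:ℝ) < 2*a*(a-1) := by nlinarith
  exact mul_pos (mul_pos this (Real.rpow_pos_of_pos hx0 _)) (Q0_pos a ha x hx)

lemma P3_pos (a : ℝ) (ha : 5 ≤ a) : ∀ x : ℝ, 1 < x → 0 < P3 a x := by
  intro x hx
  refine pos_aux (P3 a) (P4 a) (hd3 a) ?_ (P4_pos a ha) hx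
  unfold P3
  rw [Real.one_rpow, Real.one_rpow, Real.one_rpow, Real.one_rpow]
  nlinarith [sq_nonneg a]

lemma P2_pos (a : ℝ) (ha : 5 ≤ a) : ∀ x : ℝ, 1 < x → 0 < P2 a x := by
  intro x hx
  refine pos_aux (P2 a) (P3 a) (hd2 a) ?_ (P3_pos a ha) hx
  unfold P2
  rw [Real.one_rpow, Real.one_rpow, Real.one_rpow, Real.one_rpow]
  nlinarith [sq_nonneg a]

lemma P1_pos (a : ℝ) (ha : 5 ≤ a) : ∀ x : ℝ, 1 < x → 0 < P1 a x := by
  intro x hx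
  refine pos_aux (P1 a) (P2 a) (hd1 a) ?_ (P2_pos a ha) hx
  unfold P1
  rw [Real.one_rpow, Real.one_rpow, Real.one_rpow, Real.one_rpow]
  nlinarith [sq_nonneg a]

lemma P0_pos (a : ℝ) (ha : 5 ≤ a) : ∀ x : ℝ, 1 < x → 0 < P0 a x := by
  intro x hx
  refine pos_aux (P0 a) (P1 a) (hd0 a) ?_ (P1_pos a ha) hx
  unfold P0
  rw [Real.one_rpow, Real.one_rpow, Real.one_rpow, Real.one_rpow, Real.one_rpow]
  nlinarith [sq_nonneg a]

theorem stmt_1 (α y : ℝ) (hα : 5 ≤ α) (hy : 1 < y) :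
    0 < ((y ^ α - 1) / (y - 1)) ^ 2 - α * ((α - 1) * y ^ α + 1) := by
  have hy0 : (0:ℝ) < y := lt_trans one_pos hy
  have hy1 : (0:ℝ) < y - 1 := by linarith
  have hP := P0_pos α hα y hy
  have e1 : y^(2*α) = y^α * y^α := by
    rw [← Real.rpow_add hy0]; congr 1; ring
  have e2 : y^(α+2) = y^α * y^(2:ℝ) := by
    rw [← Real.rpow_add hy0]
  have e3 : y^(α+1) = y^α * y := by
    rw [Real.rpow_add hy0, Real.rpow_one]
  have e4 : y^(2:ℝ) = y * y := by
    rw [show (2:ℝ) = ((2:ℕ):ℝ) by norm_num, Real.rpow_natCast]; ring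
  have hkey : ((y ^ α - 1) / (y - 1)) ^ 2 - α * ((α - 1) * y ^ α + 1)
      = P0 α y / (y-1)^2 := by
    unfold P0
    rw [e1, e2, e3, e4, div_pow]
    rw [div_sub' (by positivity), div_eq_div_iff (by positivity) (by positivity)]
    ring
  rw [hkey]
  exact div_pos hP (by positivity)
end

section
/- Shock curve dominates rarefaction curve: Let 1 < γ ≤ 5/3, p⁰ > 0, ρ⁰ > 0 with 0 < 1 - b·ρ⁰ < 1 (b ≥ 0). Define f_S(p) = (p - p⁰)·sqrt(2/((γ+1)ρ⁰))·(p + ((γ-1)/(γ+1))p⁰)^(−1/2)·sqrt(1 - b·ρ⁰) and f_R(p) = (2·sqrt(γp⁰/ρ⁰)/(γ−1))·((p/p⁰)^((γ−1)/(2γ)) − 1)·sqrt(1 - b·ρ⁰). Then f_S(p⁰) = f_R(p⁰) and f_S(p) > f_R(p) for every p > p⁰. -/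
namespace Stmt2Aux

noncomputable def FF (γ p0 ρ0 : ℝ) (p : ℝ) : ℝ :=
  (p - p0) * Real.sqrt (2 / ((γ + 1) * ρ0)) * (p + (γ - 1) / (γ + 1) * p0) ^ (-(1/2) : ℝ)

noncomputable def GG (γ p0 ρ0 : ℝ) (p : ℝ) : ℝ :=
  2 * Real.sqrt (γ * p0 / ρ0) / (γ - 1) * ((p / p0) ^ ((γ - 1) / (2 * γ)) - 1)

noncomputable def AA (γ p0 ρ0 : ℝ) (p : ℝ) : ℝ :=
  Real.sqrt (2 / ((γ + 1) * ρ0)) * ((p + (2 * ((γ - 1) / (γ + 1)) + 1) * p0) / 2) *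
    (p + (γ - 1) / (γ + 1) * p0) ^ (-(3/2) : ℝ)

noncomputable def BB (γ p0 ρ0 : ℝ) (p : ℝ) : ℝ :=
  2 * Real.sqrt (γ * p0 / ρ0) / (γ - 1) * ((γ - 1) / (2 * γ)) *
    (p / p0) ^ ((γ - 1) / (2 * γ) - 1) / p0

noncomputable def LL (γ p0 : ℝ) (p : ℝ) : ℝ :=
  Real.log (p + (2 * ((γ - 1) / (γ + 1)) + 1) * p0) -
    (3/2) * Real.log (p + (γ - 1) / (γ + 1) * p0) + ((γ + 1) / (2 * γ)) * Real.log p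

noncomputable def LL' (γ p0 : ℝ) (p : ℝ) : ℝ :=
  (p + (2 * ((γ - 1) / (γ + 1)) + 1) * p0)⁻¹ -
    (3/2) * (p + (γ - 1) / (γ + 1) * p0)⁻¹ + ((γ + 1) / (2 * γ)) * p⁻¹

lemma hasDerivAt_FF (γ p0 ρ0 : ℝ) (hγ1 : 1 < γ) (hp0 : 0 < p0) (p : ℝ) (hp : 0 < p) :
    HasDerivAt (FF γ p0 ρ0) (AA γ p0 ρ0 p) p := by
  have hγp : (0:ℝ) < γ + 1 := by linarith
  have ha0 : (0:ℝ) < (γ - 1) / (γ + 1) := div_pos (by linarith) hγp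
  have hpa : (0:ℝ) < p + (γ - 1) / (γ + 1) * p0 := by positivity
  have h1 : HasDerivAt (fun q : ℝ => (q - p0) * Real.sqrt (2 / ((γ + 1) * ρ0)))
      (Real.sqrt (2 / ((γ + 1) * ρ0))) p := by
    simpa using ((hasDerivAt_id p).sub_const p0).mul_const (Real.sqrt (2 / ((γ + 1) * ρ0)))
  have h2 : HasDerivAt (fun q : ℝ => (q + (γ - 1) / (γ + 1) * p0) ^ (-(1/2) : ℝ))
      (1 * (-(1/2) : ℝ) * (p + (γ - 1) / (γ + 1) * p0) ^ ((-(1/2) : ℝ) - 1)) p :=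
    ((hasDerivAt_id p).add_const _).rpow_const (Or.inl hpa.ne')
  have h3 := h1.mul h2
  convert h3 using 1
  · rfl
  · rfl
  · rfl
  have e1 : ((-(1/2) : ℝ) - 1) = (-(3/2) : ℝ) := by norm_num
  have e2 : (p + (γ - 1) / (γ + 1) * p0) ^ (-(1/2) : ℝ) =
      (p + (γ - 1) / (γ + 1) * p0) * (p + (γ - 1) / (γ + 1) * p0) ^ (-(3/2) : ℝ) := by
    rw [← Real.rpow_one_add' hpa.le (by norm_num)]
    norm_num
  rw [e1, AA, e2]
  ring

lemma hasDerivAt_GG (γ p0 ρ0 : ℝ) (hp0 : 0 < p0) (p : ℝ) (hp : 0 < p) :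
    HasDerivAt (GG γ p0 ρ0) (BB γ p0 ρ0 p) p := by
  have h3 : HasDerivAt (fun q : ℝ => q / p0) (1 / p0) p := by
    simpa using (hasDerivAt_id p).div_const p0
  have h4 : HasDerivAt (fun q : ℝ => (q / p0) ^ ((γ - 1) / (2 * γ)))
      (1 / p0 * ((γ - 1) / (2 * γ)) * (p / p0) ^ ((γ - 1) / (2 * γ) - 1)) p :=
    h3.rpow_const (Or.inl (div_pos hp hp0).ne')
  have h5 := (h4.sub_const 1).const_mul (2 * Real.sqrt (γ * p0 / ρ0) / (γ - 1))
  convert h5 using 1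
  · rfl
  · rfl
  · rfl
  rw [BB]
  ring

lemma hasDerivAt_LL (γ p0 : ℝ) (hγ1 : 1 < γ) (hp0 : 0 < p0) (p : ℝ) (hp : 0 < p) :
    HasDerivAt (LL γ p0) (LL' γ p0 p) p := by
  have hγp : (0:ℝ) < γ + 1 := by linarith
  have ha0 : (0:ℝ) < (γ - 1) / (γ + 1) := div_pos (by linarith) hγp
  have hpa : (0:ℝ) < p + (γ - 1) / (γ + 1) * p0 := by positivity
  have hpb : (0:ℝ) < p + (2 * ((γ - 1) / (γ + 1)) + 1) * p0 := by positivity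
  have h1 : HasDerivAt (fun q : ℝ => Real.log (q + (2 * ((γ - 1) / (γ + 1)) + 1) * p0))
      (1 / (p + (2 * ((γ - 1) / (γ + 1)) + 1) * p0)) p :=
    ((hasDerivAt_id p).add_const _).log hpb.ne'
  have h2 : HasDerivAt (fun q : ℝ => Real.log (q + (γ - 1) / (γ + 1) * p0))
      (1 / (p + (γ - 1) / (γ + 1) * p0)) p :=
    ((hasDerivAt_id p).add_const _).log hpa.ne'
  have h3 := Real.hasDerivAt_log hp.ne'
  have h4 := (h1.sub (h2.const_mul (3/2 : ℝ))).add (h3.const_mul ((γ + 1) / (2 * γ)))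
  convert h4 using 1
  · rfl
  · rfl
  · rfl
  rw [LL']
  field_simp

lemma Lprime_eq (a p p0 : ℝ) (h1 : p ≠ 0) (h2 : p + a * p0 ≠ 0)
    (h3 : p + (2 * a + 1) * p0 ≠ 0) (h4 : 1 + a ≠ 0) :
    (p + (2 * a + 1) * p0)⁻¹ - (3/2) * (p + a * p0)⁻¹ + 1 / (1 + a) * p⁻¹ =
      ((p - p0) * ((1 - a) * p - (4 * a ^ 2 + 2 * a) * p0)) /
        (2 * (1 + a) * p * (p + a * p0) * (p + (2 * a + 1) * p0)) := by
  field_simp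
  ring

lemma LL'_pos (γ p0 : ℝ) (hγ1 : 1 < γ) (hγ2 : γ ≤ 5/3) (hp0 : 0 < p0) (p : ℝ) (hp : p0 < p) :
    0 < LL' γ p0 p := by
  have hγp : (0:ℝ) < γ + 1 := by linarith
  have hγ0 : (0:ℝ) < γ := by linarith
  have ha0 : (0:ℝ) < (γ - 1) / (γ + 1) := div_pos (by linarith) hγp
  have hp' : (0:ℝ) < p := lt_trans hp0 hp
  have hpa : (0:ℝ) < p + (γ - 1) / (γ + 1) * p0 := by positivity
  have hpb : (0:ℝ) < p + (2 * ((γ - 1) / (γ + 1)) + 1) * p0 := by positivity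
  have h1a : (0:ℝ) < 1 + (γ - 1) / (γ + 1) := by positivity
  have e : (γ + 1) / (2 * γ) = 1 / (1 + (γ - 1) / (γ + 1)) := by
    rw [show (1:ℝ) + (γ - 1) / (γ + 1) = 2 * γ / (γ + 1) by field_simp; ring, one_div_div]
  rw [LL', e, Lprime_eq _ _ _ hp'.ne' hpa.ne' hpb.ne' h1a.ne']
  have ha14 : (γ - 1) / (γ + 1) ≤ 1/4 := by rw [div_le_iff₀ hγp]; linarith
  apply div_pos
  · apply mul_pos (by linarith)
    nlinarith [mul_pos ha0 hp0, sq_nonneg ((γ - 1) / (γ + 1))]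
  · positivity

lemma AA_pos (γ p0 ρ0 : ℝ) (hγ1 : 1 < γ) (hp0 : 0 < p0) (hρ0 : 0 < ρ0) (p : ℝ) (hp : 0 < p) :
    0 < AA γ p0 ρ0 p := by
  have hγp : (0:ℝ) < γ + 1 := by linarith
  have ha0 : (0:ℝ) < (γ - 1) / (γ + 1) := div_pos (by linarith) hγp
  have h1 : (0:ℝ) < 2 / ((γ + 1) * ρ0) := by positivity
  have hpa : (0:ℝ) < p + (γ - 1) / (γ + 1) * p0 := by positivity
  rw [AA]
  have := Real.sqrt_pos.mpr h1
  have := Real.rpow_pos_of_pos hpa (-(3/2) : ℝ)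
  positivity

lemma BB_pos (γ p0 ρ0 : ℝ) (hγ1 : 1 < γ) (hp0 : 0 < p0) (hρ0 : 0 < ρ0) (p : ℝ) (hp : 0 < p) :
    0 < BB γ p0 ρ0 p := by
  have hγ0 : (0:ℝ) < γ := by linarith
  have hγm : (0:ℝ) < γ - 1 := by linarith
  have h1 : (0:ℝ) < γ * p0 / ρ0 := by positivity
  have h2 := Real.sqrt_pos.mpr h1
  have h3 := Real.rpow_pos_of_pos (div_pos hp hp0) ((γ - 1) / (2 * γ) - 1)
  rw [BB]
  positivity

lemma AB_p0 (γ p0 ρ0 : ℝ) (hγ1 : 1 < γ) (hp0 : 0 < p0) (hρ0 : 0 < ρ0) :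
    AA γ p0 ρ0 p0 = BB γ p0 ρ0 p0 := by
  have hγp : (0:ℝ) < γ + 1 := by linarith
  have hγ0 : (0:ℝ) < γ := by linarith
  have hγm : (0:ℝ) < γ - 1 := by linarith
  have ha0 : (0:ℝ) < (γ - 1) / (γ + 1) := div_pos hγm hγp
  have hX : (0:ℝ) < p0 + (γ - 1) / (γ + 1) * p0 := by positivity
  have hBB : BB γ p0 ρ0 p0 = Real.sqrt (γ * p0 / ρ0) / (γ * p0) := by
    rw [BB, div_self hp0.ne', Real.one_rpow]
    field_simp
  have hAA : AA γ p0 ρ0 p0 = Real.sqrt (2 / ((γ + 1) * ρ0)) *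
      (p0 + (γ - 1) / (γ + 1) * p0) ^ (-(1/2) : ℝ) := by
    rw [AA]
    rw [show (-(1/2) : ℝ) = 1 + (-(3/2) : ℝ) by norm_num, Real.rpow_add hX, Real.rpow_one]
    have : (p0 + (2 * ((γ - 1) / (γ + 1)) + 1) * p0) / 2 = p0 + (γ - 1) / (γ + 1) * p0 := by
      ring
    rw [this]
    ring
  rw [hAA, hBB]
  have e1 : (p0 + (γ - 1) / (γ + 1) * p0) ^ (-(1/2) : ℝ) =
      Real.sqrt ((p0 + (γ - 1) / (γ + 1) * p0)⁻¹) := by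
    rw [Real.sqrt_inv, Real.sqrt_eq_rpow, ← Real.rpow_neg hX.le]
  have e3 : Real.sqrt (γ * p0 / ρ0) / (γ * p0) =
      Real.sqrt (γ * p0 / ρ0 * ((γ * p0) ^ 2)⁻¹) := by
    rw [Real.sqrt_mul (by positivity), Real.sqrt_inv, Real.sqrt_sq (by positivity),
      div_eq_mul_inv]
  rw [e1, e3, ← Real.sqrt_mul (by positivity)]
  congr 1
  field_simp
  ring

lemma log_AA (γ p0 ρ0 : ℝ) (hγ1 : 1 < γ) (hp0 : 0 < p0) (hρ0 : 0 < ρ0) (q : ℝ) (hq : 0 < q) :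
    Real.log (AA γ p0 ρ0 q) = Real.log (Real.sqrt (2 / ((γ + 1) * ρ0))) - Real.log 2 +
      Real.log (q + (2 * ((γ - 1) / (γ + 1)) + 1) * p0) -
      (3/2) * Real.log (q + (γ - 1) / (γ + 1) * p0) := by
  have hγp : (0:ℝ) < γ + 1 := by linarith
  have ha0 : (0:ℝ) < (γ - 1) / (γ + 1) := div_pos (by linarith) hγp
  have hS : (0:ℝ) < Real.sqrt (2 / ((γ + 1) * ρ0)) := Real.sqrt_pos.mpr (by positivity)
  have hK : (0:ℝ) < q + (2 * ((γ - 1) / (γ + 1)) + 1) * p0 := by positivity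
  have hX : (0:ℝ) < q + (γ - 1) / (γ + 1) * p0 := by positivity
  have hXr : (0:ℝ) < (q + (γ - 1) / (γ + 1) * p0) ^ (-(3/2) : ℝ) :=
    Real.rpow_pos_of_pos hX _
  rw [AA, Real.log_mul (by positivity) hXr.ne', Real.log_mul hS.ne' (by positivity),
    Real.log_div hK.ne' two_ne_zero, Real.log_rpow hX]
  ring

lemma log_BB (γ p0 ρ0 : ℝ) (hγ1 : 1 < γ) (hp0 : 0 < p0) (hρ0 : 0 < ρ0) (q : ℝ) (hq : 0 < q) :
    Real.log (BB γ p0 ρ0 q) = Real.log (2 * Real.sqrt (γ * p0 / ρ0) / (γ - 1)) +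
      Real.log ((γ - 1) / (2 * γ)) +
      ((γ - 1) / (2 * γ) - 1) * (Real.log q - Real.log p0) - Real.log p0 := by
  have hγ0 : (0:ℝ) < γ := by linarith
  have hγm : (0:ℝ) < γ - 1 := by linarith
  have hc2 : (0:ℝ) < 2 * Real.sqrt (γ * p0 / ρ0) / (γ - 1) := by
    have := Real.sqrt_pos.mpr (show (0:ℝ) < γ * p0 / ρ0 by positivity)
    positivity
  have hθ : (0:ℝ) < (γ - 1) / (2 * γ) := by positivity
  have hr : (0:ℝ) < (q / p0) ^ ((γ - 1) / (2 * γ) - 1) :=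
    Real.rpow_pos_of_pos (div_pos hq hp0) _
  rw [BB, Real.log_div (by positivity) hp0.ne', Real.log_mul (by positivity) hr.ne',
    Real.log_mul hc2.ne' hθ.ne', Real.log_rpow (div_pos hq hp0),
    Real.log_div hq.ne' hp0.ne']

lemma AB_lt (γ p0 ρ0 : ℝ) (hγ1 : 1 < γ) (hγ2 : γ ≤ 5/3) (hp0 : 0 < p0) (hρ0 : 0 < ρ0)
    (p : ℝ) (hp : p0 < p) : BB γ p0 ρ0 p < AA γ p0 ρ0 p := by
  have hp' : (0:ℝ) < p := lt_trans hp0 hp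
  have hmono : StrictMonoOn (LL γ p0) (Set.Ici p0) :=
    strictMonoOn_of_deriv_pos (convex_Ici p0)
      (fun x hx => (hasDerivAt_LL γ p0 hγ1 hp0 x (hp0.trans_le hx)).continuousAt.continuousWithinAt)
      (fun x hx => by
        rw [interior_Ici] at hx
        rw [(hasDerivAt_LL γ p0 hγ1 hp0 x (hp0.trans hx)).deriv]
        exact LL'_pos γ p0 hγ1 hγ2 hp0 x hx)
  have hLp := hmono Set.self_mem_Ici (Set.mem_Ici.mpr hp.le) hp
  have h1 := log_AA γ p0 ρ0 hγ1 hp0 hρ0 p hp'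
  have h2 := log_AA γ p0 ρ0 hγ1 hp0 hρ0 p0 hp0
  have h3 := log_BB γ p0 ρ0 hγ1 hp0 hρ0 p hp'
  have h4 := log_BB γ p0 ρ0 hγ1 hp0 hρ0 p0 hp0
  have h5 : Real.log (AA γ p0 ρ0 p0) = Real.log (BB γ p0 ρ0 p0) := by
    rw [AB_p0 γ p0 ρ0 hγ1 hp0 hρ0]
  simp only [LL] at hLp
  have hγ0 : (0:ℝ) < γ := by linarith
  have e6 : (γ - 1) / (2 * γ) - 1 = -((γ + 1) / (2 * γ)) := by
    field_simp
    ring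
  rw [e6] at h3 h4
  have hlog : Real.log (BB γ p0 ρ0 p) < Real.log (AA γ p0 ρ0 p) := by linarith
  exact (Real.log_lt_log_iff (BB_pos γ p0 ρ0 hγ1 hp0 hρ0 p hp')
    (AA_pos γ p0 ρ0 hγ1 hp0 hρ0 p hp')).mp hlog

lemma FG_lt (γ p0 ρ0 : ℝ) (hγ1 : 1 < γ) (hγ2 : γ ≤ 5/3) (hp0 : 0 < p0) (hρ0 : 0 < ρ0)
    (p : ℝ) (hp : p0 < p) : GG γ p0 ρ0 p < FF γ p0 ρ0 p := by
  have hmono : StrictMonoOn (fun q => FF γ p0 ρ0 q - GG γ p0 ρ0 q) (Set.Ici p0) :=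
    strictMonoOn_of_deriv_pos (convex_Ici p0)
      (fun x hx => (((hasDerivAt_FF γ p0 ρ0 hγ1 hp0 x (hp0.trans_le hx)).sub
        (hasDerivAt_GG γ p0 ρ0 hp0 x (hp0.trans_le hx))).continuousAt).continuousWithinAt)
      (fun x hx => by
        rw [interior_Ici] at hx
        rw [HasDerivAt.deriv (f := fun q => FF γ p0 ρ0 q - GG γ p0 ρ0 q) ((hasDerivAt_FF γ p0 ρ0 hγ1 hp0 x (hp0.trans hx)).sub
          (hasDerivAt_GG γ p0 ρ0 hp0 x (hp0.trans hx)))]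
        exact sub_pos.mpr (AB_lt γ p0 ρ0 hγ1 hγ2 hp0 hρ0 x hx))
  have h0 : FF γ p0 ρ0 p0 - GG γ p0 ρ0 p0 = 0 := by
    rw [FF, GG, div_self hp0.ne', Real.one_rpow]
    simp
  have := hmono Set.self_mem_Ici (Set.mem_Ici.mpr hp.le) hp
  simp only at this
  linarith

end Stmt2Aux

theorem stmt_2 (γ b p0 ρ0 : ℝ) (hγ1 : 1 < γ) (hγ2 : γ ≤ 5/3) (hb : 0 ≤ b)
    (hp0 : 0 < p0) (hρ0 : 0 < ρ0) (hcov0 : 0 < 1 - b * ρ0) (hcov1 : 1 - b * ρ0 < 1)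
    (fS fR : ℝ → ℝ)
    (hfS : ∀ p, fS p = (p - p0) * Real.sqrt (2 / ((γ + 1) * ρ0)) *
        (p + (γ - 1) / (γ + 1) * p0) ^ (-(1/2) : ℝ) * Real.sqrt (1 - b * ρ0))
    (hfR : ∀ p, fR p = 2 * Real.sqrt (γ * p0 / ρ0) / (γ - 1) *
        ((p / p0) ^ ((γ - 1) / (2 * γ)) - 1) * Real.sqrt (1 - b * ρ0)) :
    fS p0 = fR p0 ∧ ∀ p, p0 < p → fR p < fS p := by
  have hC : 0 < Real.sqrt (1 - b * ρ0) := Real.sqrt_pos.mpr hcov0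
  constructor
  · rw [hfS, hfR, div_self hp0.ne', Real.one_rpow]
    simp
  · intro p hp
    rw [hfS, hfR]
    have h := Stmt2Aux.FG_lt γ p0 ρ0 hγ1 hγ2 hp0 hρ0 p hp
    rw [Stmt2Aux.FF, Stmt2Aux.GG] at h
    exact mul_lt_mul_of_pos_right h hC
end

section
/- If γ > 5/3 (equivalently α = 2 + 2/(γ-1) < 5), then there exists x₀ > 1 such that the shock curve value is strictly below the rarefaction curve value at x₀, i.e., the scaled functions f̃_S(x) = (x-1)/sqrt(x + (γ-1)/(γ+1)) · sqrt(2/(γ+1)) and f̃_R(x) = (2√γ/(γ-1))·(x^((γ-1)/(2γ)) - 1) satisfy f̃_S(x₀) < f̃_R(x₀). -/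
lemma rpow_hasDeriv (c ε : ℝ) (hε : 0 ≤ ε) :
    HasDerivAt (fun t : ℝ => (1+t) ^ c) (c * (1+ε) ^ (c-1)) ε := by
  have h1 : (1:ℝ)+ε ≠ 0 := by positivity
  have h := Real.hasDerivAt_rpow_const (x := 1+ε) (p := c) (Or.inl h1)
  have h2 : HasDerivAt (fun t : ℝ => 1+t) 1 ε := (hasDerivAt_id ε).const_add 1
  have h3 := h.comp ε h2
  simp only [mul_one] at h3
  exact h3

lemma nonneg_from_deriv (F F' : ℝ → ℝ) (hF : ∀ ε : ℝ, 0 ≤ ε → HasDerivAt F (F' ε) ε)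
    (hF' : ∀ ε : ℝ, 0 ≤ ε → 0 ≤ F' ε) (hF0 : F 0 = 0) : ∀ ε : ℝ, 0 ≤ ε → 0 ≤ F ε := by
  intro ε hε
  have hmono : MonotoneOn F (Set.Ici 0) := by
    apply monotoneOn_of_deriv_nonneg (convex_Ici 0)
    · exact fun x hx => (hF x hx).continuousAt.continuousWithinAt
    · intro x hx
      rw [interior_Ici] at hx
      exact (hF x (le_of_lt hx)).differentiableAt.differentiableWithinAt
    · intro x hx
      rw [interior_Ici] at hx
      rw [(hF x (le_of_lt hx)).deriv]
      exact hF' x (le_of_lt hx)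
  have := hmono (Set.self_mem_Ici) (Set.mem_Ici.2 hε) hε
  linarith [this, hF0.ge]

lemma step1 (m s : ℝ) (hm : 0 ≤ m) (hs : 0 ≤ s) : 1 - 3*s ≤ (1+s) ^ (m-3 : ℝ) := by
  have h1 : (0:ℝ) < 1+s := by linarith
  have key : (1 - 3*s) ≤ (1+s) ^ (-3 : ℝ) := by
    have h3 : (1+s:ℝ) ^ (-3:ℝ) = ((1+s)^(3:ℕ))⁻¹ := by
      rw [← Real.rpow_natCast (1+s) 3, ← Real.rpow_neg h1.le]
      norm_num
    rw [h3, inv_eq_one_div, le_div_iff₀ (pow_pos h1 3)]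
    nlinarith [sq_nonneg s, pow_pos h1 3]
  calc 1 - 3*s ≤ (1+s) ^ (-3:ℝ) := key
    _ ≤ (1+s) ^ (m-3:ℝ) :=
      Real.rpow_le_rpow_of_exponent_le (by linarith) (by linarith)

lemma step2 (m ε : ℝ) (hm0 : 0 ≤ m) (hm : m ≤ 2) (hε : 0 ≤ ε) :
    (1+ε) ^ (m-2 : ℝ) ≤ 1 - (2-m)*ε + (3*(2-m)/2)*ε^2 := by
  have key := nonneg_from_deriv
    (fun t => 1 - (2-m)*t + (3*(2-m)/2)*t^2 - (1+t) ^ (m-2:ℝ))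
    (fun t => (2-m) * ((1+t) ^ (m-3:ℝ) - (1 - 3*t)))
    (fun t ht => by
      have h1 : HasDerivAt (fun t : ℝ => 1 - (2-m)*t + (3*(2-m)/2)*t^2)
          (-(2-m) + (3*(2-m)/2)*(2*t)) t := by
        have := (((hasDerivAt_id t).const_mul (2-m)).const_sub 1).add
          (((hasDerivAt_pow 2 t).const_mul (3*(2-m)/2)))
        refine this.congr_deriv ?_
        norm_num
      have h2 := rpow_hasDeriv (m-2) t ht
      have := h1.sub h2
      refine this.congr_deriv ?_
      have : (m-2) - 1 = m - 3 := by ring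
      rw [this]; ring
    )
    (fun t ht => by
      have := step1 m t hm0 ht
      have h2m : (0:ℝ) ≤ 2 - m := by linarith
      exact mul_nonneg h2m (by linarith))
    (by norm_num)
  have := key ε hε
  linarith

lemma step3 (m ε : ℝ) (hm0 : 0 ≤ m) (hm : m ≤ 1) (hε : 0 ≤ ε) :
    1 - (1-m)*ε + ((1-m)*(2-m)/2)*ε^2 - ((1-m)*(2-m)/2)*ε^3 ≤ (1+ε) ^ (m-1 : ℝ) := by
  have key := nonneg_from_deriv
    (fun t => (1+t) ^ (m-1:ℝ) - (1 - (1-m)*t + ((1-m)*(2-m)/2)*t^2 - ((1-m)*(2-m)/2)*t^3))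
    (fun t => (1-m) * ((1 - (2-m)*t + (3*(2-m)/2)*t^2) - (1+t) ^ (m-2:ℝ)))
    (fun t ht => by
      have h2 := rpow_hasDeriv (m-1) t ht
      have h1 : HasDerivAt (fun t : ℝ => 1 - (1-m)*t + ((1-m)*(2-m)/2)*t^2 - ((1-m)*(2-m)/2)*t^3)
          (-(1-m) + ((1-m)*(2-m)/2)*(2*t) - ((1-m)*(2-m)/2)*(3*t^2)) t := by
        have := ((((hasDerivAt_id t).const_mul (1-m)).const_sub 1).add
          ((hasDerivAt_pow 2 t).const_mul ((1-m)*(2-m)/2))).sub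
          ((hasDerivAt_pow 3 t).const_mul ((1-m)*(2-m)/2))
        refine this.congr_deriv ?_
        norm_num
      have := h2.sub h1
      refine this.congr_deriv ?_
      have hh : (m-1) - 1 = m - 2 := by ring
      rw [hh]; ring
    )
    (fun t ht => by
      have := step2 m t hm0 (by linarith) ht
      exact mul_nonneg (by linarith) (by linarith))
    (by norm_num)
  have := key ε hε
  linarith

lemma step4 (m ε : ℝ) (hm0 : 0 ≤ m) (hm : m ≤ 1) (hε : 0 ≤ ε) :
    1 + m*ε - (m*(1-m)/2)*ε^2 + (m*(1-m)*(2-m)/6)*ε^3 - (m*(1-m)*(2-m)/8)*ε^4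
      ≤ (1+ε) ^ (m : ℝ) := by
  have key := nonneg_from_deriv
    (fun t => (1+t) ^ (m:ℝ) -
      (1 + m*t - (m*(1-m)/2)*t^2 + (m*(1-m)*(2-m)/6)*t^3 - (m*(1-m)*(2-m)/8)*t^4))
    (fun t => m * ((1+t) ^ (m-1:ℝ) -
      (1 - (1-m)*t + ((1-m)*(2-m)/2)*t^2 - ((1-m)*(2-m)/2)*t^3)))
    (fun t ht => by
      have h2 := rpow_hasDeriv m t ht
      have h1 : HasDerivAt (fun t : ℝ =>
          1 + m*t - (m*(1-m)/2)*t^2 + (m*(1-m)*(2-m)/6)*t^3 - (m*(1-m)*(2-m)/8)*t^4)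
          (m - (m*(1-m)/2)*(2*t) + (m*(1-m)*(2-m)/6)*(3*t^2) - (m*(1-m)*(2-m)/8)*(4*t^3)) t := by
        have := ((((hasDerivAt_id t).const_mul m).const_add 1).sub
          ((hasDerivAt_pow 2 t).const_mul (m*(1-m)/2))).add
          (((hasDerivAt_pow 3 t).const_mul (m*(1-m)*(2-m)/6)).sub
           ((hasDerivAt_pow 4 t).const_mul (m*(1-m)*(2-m)/8)))
        refine (this.congr_deriv ?_).congr_of_eventuallyEq (Filter.Eventually.of_forall fun u => ?_)
        · norm_num; ring
        · simp only [Pi.add_apply, Pi.sub_apply, id_eq]; ring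
      have := h2.sub h1
      refine this.congr_deriv ?_
      ring
    )
    (fun t ht => by
      have := step3 m t hm0 hm ht
      exact mul_nonneg hm0 (by linarith))
    (by norm_num)
  have := key ε hε
  linarith

lemma keyB (m : ℝ) (hm1 : 1/5 < m) (hm2 : m < 1/2) :
    ∃ x : ℝ, 1 < x ∧ m*(x-1) < (x ^ (m:ℝ) - 1) * Real.sqrt ((1-m)*x + m) := by
  have hm0 : 0 < m := by linarith
  have hden : (0:ℝ) < 2 - m := by linarith
  obtain ⟨a, ha_def⟩ : ∃ a : ℝ, a = 1 - m := ⟨_, rfl⟩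
  obtain ⟨ε, hε_def⟩ : ∃ ε : ℝ, ε = (5*m-1)/(6*(2-m)) := ⟨_, rfl⟩
  have ha0 : 0 < a := by rw [ha_def]; linarith
  have ha1 : a < 1 := by rw [ha_def]; linarith
  have hε0 : 0 < ε := by rw [hε_def]; exact div_pos (by linarith) (by linarith)
  have hε6 : ε < 1/6 := by
    rw [hε_def, div_lt_iff₀ (by linarith : (0:ℝ) < 6*(2-m))]
    linarith
  obtain ⟨r, hr_def⟩ : ∃ r : ℝ, r = (a*(2-m)/6)*(1-(3/4)*ε) := ⟨_, rfl⟩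
  have h34 : 0 < 1-(3/4)*ε := by linarith
  have hr0 : 0 ≤ r := by
    rw [hr_def]
    exact mul_nonneg (by positivity) h34.le
  have hra : r ≤ a^2 := by
    have h1 : r ≤ a*(2-m)/6 := by
      rw [hr_def]
      nlinarith [mul_pos (mul_pos ha0 hden) hε0]
    nlinarith [ha_def]
  have h2r : 2*r - 3*a^2/4 = a*(5*m-1)/24 := by
    rw [hr_def, hε_def, ha_def]
    field_simp
    ring
  have haε : a*ε < 1 := by nlinarith
  have hQ1 : 1 < (1 - a/2*ε + r*ε^2)^2*(1+a*ε) := by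
    have hid : (1 - a/2*ε + r*ε^2)^2*(1+a*ε) - 1
        = (2*r - 3*a^2/4)*ε^2 + (a^3/4)*ε^3 + a*r*ε^3*(1-a*ε) + r^2*ε^4*(1+a*ε) := by
      ring
    have h5 : (0:ℝ) < 5*m-1 := by linarith
    have p1 : 0 < (2*r - 3*a^2/4)*ε^2 := by
      rw [h2r]
      have := mul_pos (mul_pos ha0 h5) (pow_pos hε0 2)
      linarith
    have p2 : (0:ℝ) ≤ (a^3/4)*ε^3 := by positivity
    have p3 : (0:ℝ) ≤ a*r*ε^3*(1-a*ε) :=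
      mul_nonneg (by positivity) (by linarith)
    have p4 : (0:ℝ) ≤ r^2*ε^4*(1+a*ε) :=
      mul_nonneg (by positivity) (by nlinarith [mul_pos ha0 hε0])
    linarith
  refine ⟨1+ε, by linarith, ?_⟩
  have harg : (1-m)*(1+ε) + m = 1+a*ε := by rw [ha_def]; ring
  rw [harg]
  have hfac : 0 < 1 - a/2*ε + r*ε^2 := by nlinarith
  obtain ⟨L, hL_def⟩ : ∃ L : ℝ, L = m*ε*(1 - a/2*ε + r*ε^2) := ⟨_, rfl⟩
  have hLpos : 0 < L := by rw [hL_def]; positivity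
  have hLle : L ≤ (1+ε) ^ (m:ℝ) - 1 := by
    have h4 := step4 m ε hm0.le (by linarith) hε0.le
    have : 1 + L = 1 + m*ε - (m*(1-m)/2)*ε^2 + (m*(1-m)*(2-m)/6)*ε^3
        - (m*(1-m)*(2-m)/8)*ε^4 := by
      subst hL_def hr_def ha_def; ring
    linarith
  have h1aε : (0:ℝ) < 1 + a*ε := by linarith [mul_pos ha0 hε0]
  have hT : (Real.sqrt (1+a*ε))^2 = 1+a*ε := Real.sq_sqrt h1aε.le
  have hTpos : 0 < Real.sqrt (1+a*ε) := Real.sqrt_pos.2 h1aε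
  have hXm : 0 < (1+ε) ^ (m:ℝ) - 1 := lt_of_lt_of_le hLpos hLle
  have hRHSnn : 0 ≤ ((1+ε) ^ (m:ℝ) - 1) * Real.sqrt (1+a*ε) :=
    mul_nonneg hXm.le hTpos.le
  have hsq : (m*(1+ε-1))^2 < (((1+ε) ^ (m:ℝ) - 1) * Real.sqrt (1+a*ε))^2 := by
    have e1 : (((1+ε) ^ (m:ℝ) - 1) * Real.sqrt (1+a*ε))^2
        = ((1+ε) ^ (m:ℝ) - 1)^2 * (1+a*ε) := by
      rw [mul_pow, hT]
    have e2 : L^2 ≤ ((1+ε) ^ (m:ℝ) - 1)^2 :=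
      pow_le_pow_left₀ hLpos.le hLle 2
    have e3 : L^2 * (1+a*ε) = (m*ε)^2 * ((1 - a/2*ε + r*ε^2)^2*(1+a*ε)) := by
      rw [hL_def]; ring
    have e4 : (m*ε)^2 * 1 < (m*ε)^2 * ((1 - a/2*ε + r*ε^2)^2*(1+a*ε)) :=
      mul_lt_mul_of_pos_left hQ1 (by positivity)
    have e5 : L^2 * (1+a*ε) ≤ ((1+ε) ^ (m:ℝ) - 1)^2 * (1+a*ε) :=
      mul_le_mul_of_nonneg_right e2 h1aε.le
    calc (m*(1+ε-1))^2 = (m*ε)^2 * 1 := by ring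
      _ < (m*ε)^2 * ((1 - a/2*ε + r*ε^2)^2*(1+a*ε)) := e4
      _ = L^2 * (1+a*ε) := e3.symm
      _ ≤ ((1+ε) ^ (m:ℝ) - 1)^2 * (1+a*ε) := e5
      _ = _ := e1.symm
  exact lt_of_pow_lt_pow_left₀ 2 hRHSnn hsq

theorem stmt_3 (γ : ℝ) (hγ : 5/3 < γ) :
    ∃ x₀ : ℝ, 1 < x₀ ∧
      (x₀ - 1) / Real.sqrt (x₀ + (γ - 1) / (γ + 1)) * Real.sqrt (2 / (γ + 1)) <
        2 * Real.sqrt γ / (γ - 1) * (x₀ ^ ((γ - 1) / (2 * γ)) - 1) := by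
  have hγ0 : 0 < γ := by linarith
  have hγ1 : 0 < γ - 1 := by linarith
  have hγp1 : 0 < γ + 1 := by linarith
  obtain ⟨m, hm_def⟩ : ∃ m : ℝ, m = (γ-1)/(2*γ) := ⟨_, rfl⟩
  have hm1 : 1/5 < m := by
    rw [hm_def, lt_div_iff₀ (by linarith : (0:ℝ) < 2*γ)]
    linarith
  have hm2 : m < 1/2 := by
    rw [hm_def, div_lt_iff₀ (by linarith : (0:ℝ) < 2*γ)]
    linarith
  have hm0 : 0 < m := by linarith
  obtain ⟨x, hx1, hx⟩ := keyB m hm1 hm2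
  refine ⟨x, hx1, ?_⟩
  rw [← hm_def]
  have hTarg : 0 < (1-m)*x + m := by nlinarith
  have hT0 : 0 < Real.sqrt ((1-m)*x + m) := Real.sqrt_pos.2 hTarg
  have hargS : x + (γ-1)/(γ+1) = (2*γ/(γ+1)) * ((1-m)*x + m) := by
    rw [hm_def]; field_simp; ring
  have hS : Real.sqrt (x + (γ-1)/(γ+1))
      = Real.sqrt (2*γ/(γ+1)) * Real.sqrt ((1-m)*x + m) := by
    rw [hargS, Real.sqrt_mul (by positivity)]
  have hSpos : 0 < Real.sqrt (x + (γ-1)/(γ+1)) := by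
    rw [hS]
    exact mul_pos (Real.sqrt_pos.2 (by positivity)) hT0
  have h1 : Real.sqrt γ * Real.sqrt (2*γ/(γ+1)) = γ * Real.sqrt (2/(γ+1)) := by
    rw [← Real.sqrt_mul hγ0.le]
    have e : γ * (2*γ/(γ+1)) = γ^2 * (2/(γ+1)) := by field_simp
    rw [e, Real.sqrt_mul (by positivity), Real.sqrt_sq hγ0.le]
  have hc : (2*Real.sqrt γ/(γ-1)) * Real.sqrt (2*γ/(γ+1)) * m = Real.sqrt (2/(γ+1)) := by
    have e : (2*Real.sqrt γ/(γ-1)) * Real.sqrt (2*γ/(γ+1))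
        = 2/(γ-1) * (Real.sqrt γ * Real.sqrt (2*γ/(γ+1))) := by ring
    rw [e, h1, hm_def]
    field_simp
  have hcpos : 0 < (2*Real.sqrt γ/(γ-1)) * Real.sqrt (2*γ/(γ+1)) :=
    mul_pos (div_pos (mul_pos two_pos (Real.sqrt_pos.2 hγ0)) hγ1)
      (Real.sqrt_pos.2 (by positivity))
  rw [div_mul_eq_mul_div, div_lt_iff₀ hSpos, hS]
  calc (x-1) * Real.sqrt (2/(γ+1))
      = (2*Real.sqrt γ/(γ-1)) * Real.sqrt (2*γ/(γ+1)) * (m*(x-1)) := by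
        rw [← hc]; ring
    _ < (2*Real.sqrt γ/(γ-1)) * Real.sqrt (2*γ/(γ+1))
        * ((x ^ (m:ℝ) - 1) * Real.sqrt ((1-m)*x + m)) :=
        mul_lt_mul_of_pos_left hx hcpos
    _ = 2*Real.sqrt γ/(γ-1) * (x ^ (m:ℝ) - 1)
        * (Real.sqrt (2*γ/(γ+1)) * Real.sqrt ((1-m)*x + m)) := by ring
end

section
/- For all x ≥ 1 and γ > 1, the function Δ₀(x) := (1 + ((γ+1)/(2γ))(x-1))^(1/2) − (x-1)·(x + (γ-1)/(γ+1))^(−1/2)·sqrt(2/(γ(γ+1))) satisfies Δ₀(x) ≥ c(γ), where c(γ) = 2·sqrt(2(γ-1))/(γ+1) if 1 < γ ≤ 3 and c(γ) = 1 if γ > 3. -/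
set_option maxHeartbeats 1000000


theorem stmt_6 (γ x : ℝ) (hγ : 1 < γ) (hx : 1 ≤ x) :
    Real.sqrt (1 + (γ + 1) / (2 * γ) * (x - 1)) -
        (x - 1) / Real.sqrt (x + (γ - 1) / (γ + 1)) * Real.sqrt (2 / (γ * (γ + 1))) ≥
      (if γ ≤ 3 then 2 * Real.sqrt (2 * (γ - 1)) / (γ + 1) else 1) := by
  have hγ0 : (0:ℝ) < γ := by linarith
  have hγ1 : (0:ℝ) < γ + 1 := by linarith
  set δ : ℝ := 2*γ/(γ+1) with hδ
  have hδpos : 0 < δ := by positivity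
  have hs_eq : x + (γ - 1) / (γ + 1) = (x - 1) + δ := by
    rw [hδ]; field_simp; ring
  set s : ℝ := x + (γ - 1) / (γ + 1) with hs
  have hsδ : δ ≤ s := by rw [hs_eq]; linarith
  have hspos : 0 < s := lt_of_lt_of_le hδpos hsδ
  set u := Real.sqrt s with hu
  have hupos : 0 < u := Real.sqrt_pos.mpr hspos
  have hu2 : u^2 = s := Real.sq_sqrt hspos.le
  set α : ℝ := (γ+1)/(2*γ) with hα
  set β : ℝ := 2/(γ*(γ+1)) with hβ
  have hαpos : 0 < α := by positivity
  have hβpos : 0 < β := by positivity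
  set v := Real.sqrt α with hv
  set w := Real.sqrt β with hw
  have hvpos : 0 < v := Real.sqrt_pos.mpr hαpos
  have hwpos : 0 < w := Real.sqrt_pos.mpr hβpos
  have hv2 : v^2 = α := Real.sq_sqrt hαpos.le
  have hw2 : w^2 = β := Real.sq_sqrt hβpos.le
  have hvw : v * w = 1/γ := by
    rw [hv, hw, ← Real.sqrt_mul hαpos.le,
      show α * β = (1/γ)^2 by rw [hα, hβ]; field_simp]
    exact Real.sqrt_sq (by positivity)
  have hβα : β ≤ α := by
    have h3 : 0 ≤ γ*(γ-1)*(γ+3) :=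
      mul_nonneg (mul_nonneg hγ0.le (by linarith)) (by linarith)
    rw [hα, hβ, div_le_div_iff₀ (by positivity) (by positivity)]
    nlinarith [h3]
  have hwv : w ≤ v := by rw [hv, hw]; exact Real.sqrt_le_sqrt hβα
  have hABq : (v-w)*(δ*w) = 2*(γ-1)/(γ+1)^2 := by
    have expand : (v-w)*(δ*w) = δ*(v*w) - δ*w^2 := by ring
    rw [expand, hvw, hw2, hδ, hβ]
    field_simp; ring
  have hv2w : γ + 1 ≥ 4 → 2 * w ≤ v := by
    intro h
    have h4βα : 4 * β ≤ α := by
      have h16 : 0 ≤ γ * ((γ+1)^2 - 16) := mul_nonneg hγ0.le (by nlinarith)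
      rw [hα, hβ, show (4:ℝ)*(2/(γ*(γ+1))) = 8/(γ*(γ+1)) by ring,
        div_le_div_iff₀ (by positivity) (by positivity)]
      nlinarith [h16]
    have h2w : 2 * w = Real.sqrt (4 * β) := by
      rw [hw, show (4:ℝ)*β = 2^2*β by ring, Real.sqrt_mul (by norm_num),
        Real.sqrt_sq (by norm_num)]
    rw [h2w, hv]
    exact Real.sqrt_le_sqrt h4βα
  have hvd : v * Real.sqrt δ = 1 := by
    rw [hv, ← Real.sqrt_mul hαpos.le,
      show α * δ = 1 by rw [hα, hδ]; field_simp]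
    exact Real.sqrt_one
  have hud : Real.sqrt δ ≤ u := by rw [hu]; exact Real.sqrt_le_sqrt hsδ
  have h1 : 1 + (γ + 1) / (2 * γ) * (x - 1) = α * s := by
    rw [hs_eq, hα, hδ]; field_simp; ring
  rw [h1, Real.sqrt_mul hαpos.le, ← hv, ← hu]
  have hx1 : x - 1 = u^2 - δ := by rw [hu2, hs_eq]; ring
  clear_value δ s u α β v w
  have main : ∀ c : ℝ, 0 ≤ v * u^2 - (u^2 - δ)*w - c*u →
      v * u - (x-1)/u * w ≥ c := by
    intro c hc
    have heq : v*u - (x-1)/u*w - c = (v*u^2 - (u^2-δ)*w - c*u)/u := by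
      rw [hx1]; field_simp
    have := div_nonneg hc hupos.le
    rw [← heq] at this
    linarith
  split_ifs with hcase
  · -- γ ≤ 3 : AM-GM
    set q := Real.sqrt (2*(γ-1)) with hq
    have hq0 : 0 ≤ q := Real.sqrt_nonneg _
    have hq2 : q^2 = 2*(γ-1) := Real.sq_sqrt (by linarith)
    have hA : 0 ≤ v - w := sub_nonneg.mpr hwv
    have hB : 0 ≤ δ * w := by positivity
    set r := Real.sqrt (v - w) with hr
    set p := Real.sqrt (δ * w) with hp
    have hr2 : r^2 = v - w := Real.sq_sqrt hA
    have hp2 : p^2 = δ * w := Real.sq_sqrt hB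
    have hrp : r * p = q/(γ+1) := by
      rw [hr, hp, ← Real.sqrt_mul hA, hABq,
        show 2*(γ-1)/(γ+1)^2 = (q/(γ+1))^2 by rw [div_pow, hq2]]
      exact Real.sqrt_sq (by positivity)
    clear_value q r p
    refine main _ ?_
    have key : v*u^2 - (u^2-δ)*w - 2*q/(γ+1)*u = (r*u - p)^2 := by
      have hexp : (r*u - p)^2 = r^2*u^2 - 2*(r*p)*u + p^2 := by ring
      rw [hexp, hr2, hp2, hrp]; ring
    rw [key]; exact sq_nonneg _
  · -- γ > 3 : monotonicity
    push_neg at hcase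
    set d := Real.sqrt δ with hd
    have hdpos : 0 < d := Real.sqrt_pos.mpr hδpos
    have hd2 : d^2 = δ := Real.sq_sqrt hδpos.le
    have h2w : 2 * w ≤ v := hv2w (by linarith)
    clear_value d
    refine main 1 ?_
    have key : v*u^2 - (u^2-δ)*w - 1*u = (u-d)*((v-w)*(u+d)-1) := by
      linear_combination (-w)*hd2 + d*hvd
    rw [key]
    apply mul_nonneg (by linarith)
    have hmul : (v/2)*(2*d) ≤ (v-w)*(u+d) :=
      mul_le_mul (by linarith) (by linarith) (by linarith) (by linarith)
    have heq : (v/2)*(2*d) = v*d := by ring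
    linarith
end

section
/- Shock density ratio for co-volume gas: Let 0 ≤ y_L < 1 and β ≥ 1 with γ > 1. If y satisfies y = y_L·(β + (γ-1)/(γ+1)) / (((γ-1+2y_L)/(γ+1))·β + (γ+1-2y_L)/(γ+1)), then 1 − y = (1 − y_L)/(1 + 2y_L(β−1)/((γ−1)β + γ + 1)), and consequently y_L ≤ y < 1. -/
theorem stmt_9 (γ yL β y : ℝ) (hγ : 1 < γ) (hyL0 : 0 ≤ yL) (hyL1 : yL < 1) (hβ : 1 ≤ β)
    (hy : y = yL * (β + (γ - 1) / (γ + 1)) /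
        ((γ - 1 + 2 * yL) / (γ + 1) * β + (γ + 1 - 2 * yL) / (γ + 1))) :
    1 - y = (1 - yL) / (1 + 2 * yL * (β - 1) / ((γ - 1) * β + γ + 1)) ∧
      yL ≤ y ∧ y < 1 := by
  have hγ1 : (0:ℝ) < γ + 1 := by linarith
  have hE : (0:ℝ) < (γ - 1) * β + γ + 1 := by nlinarith
  have hD : (0:ℝ) < (γ - 1 + 2 * yL) * β + (γ + 1 - 2 * yL) := by nlinarith
  have hD'' : (0:ℝ) < (γ - 1 + 2 * yL) / (γ + 1) * β + (γ + 1 - 2 * yL) / (γ + 1) := by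
    have h : (γ - 1 + 2 * yL) / (γ + 1) * β + (γ + 1 - 2 * yL) / (γ + 1)
        = ((γ - 1 + 2 * yL) * β + (γ + 1 - 2 * yL)) / (γ + 1) := by ring
    rw [h]; positivity
  have hy' : y = yL * ((γ + 1) * β + (γ - 1)) / ((γ - 1 + 2 * yL) * β + (γ + 1 - 2 * yL)) := by
    rw [hy, div_eq_div_iff hD''.ne' hD.ne']
    field_simp
  have hd2 : (0:ℝ) < 1 + 2 * yL * (β - 1) / ((γ - 1) * β + γ + 1) := by
    have h1 : 0 ≤ 2 * yL * (β - 1) / ((γ - 1) * β + γ + 1) := by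
      apply div_nonneg (by nlinarith) hE.le
    linarith
  have heq : 1 - y = (1 - yL) / (1 + 2 * yL * (β - 1) / ((γ - 1) * β + γ + 1)) := by
    rw [hy']
    rw [eq_div_iff hd2.ne']
    rw [one_sub_div hD.ne', add_div' _ _ _ hE.ne', div_mul_div_comm, div_eq_iff (mul_pos hD hE).ne']
    ring
  refine ⟨heq, ?_, ?_⟩
  · rw [hy', le_div_iff₀ hD]
    nlinarith [mul_nonneg hyL0 (sub_nonneg.2 hβ), mul_nonneg (mul_nonneg hyL0 hyL0) (sub_nonneg.2 hβ)]
  · have : 0 < (1 - yL) / (1 + 2 * yL * (β - 1) / ((γ - 1) * β + γ + 1)) :=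
      div_pos (by linarith) hd2
    linarith
end

section
/- Gap condition: For any admissible non-vacuum left and right states of the Riemann problem for the 1D compressible Euler equations with co-volume equation of state and γ > 1, the smallest and largest wave speeds satisfy λ₃⁺ − λ₁⁻ ≥ c(γ)(a_L + a_R), where c(γ) = 2√(2(γ−1))/(γ+1) if γ ∈ (1,3] and c(γ) = 1 if γ > 3. -/
set_option maxHeartbeats 1000000

lemma clemma (γ s : ℝ) (hγ : 1 < γ) (hs : 1 ≤ s) :
    (if γ ≤ 3 then 2 * Real.sqrt (2 * (γ - 1)) / (γ + 1) else 1) ≤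
      ((γ - 1) * s ^ 2 + 2) / ((γ + 1) * s) := by
  have hs0 : 0 < s := by linarith
  have hγ1 : (0:ℝ) < γ + 1 := by linarith
  have hden : 0 < (γ + 1) * s := by positivity
  split_ifs with h
  · rw [div_le_div_iff₀ hγ1 hden]
    have ht2 : Real.sqrt (2 * (γ - 1)) ^ 2 = 2 * (γ - 1) :=
      Real.sq_sqrt (by linarith)
    have ht0 : 0 ≤ Real.sqrt (2 * (γ - 1)) := Real.sqrt_nonneg _
    have key : 2 * Real.sqrt (2 * (γ - 1)) * s ≤ (γ - 1) * s ^ 2 + 2 := by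
      nlinarith [sq_nonneg (Real.sqrt (2 * (γ - 1)) * s - 2)]
    nlinarith [mul_le_mul_of_nonneg_right key hγ1.le]
  · rw [le_div_iff₀ hden]
    nlinarith [mul_nonneg (sub_nonneg.2 hs) (show (0:ℝ) ≤ (γ - 1) * s - 2 by nlinarith)]

lemma perstate (γ b ρ pZ a p : ℝ) (hγ : 1 < γ) (hρ : 0 < ρ) (hpZ : 0 < pZ)
    (hcov0 : 0 < 1 - b * ρ) (hcov1 : 1 - b * ρ < 1)
    (ha : a = Real.sqrt (γ * pZ / (ρ * (1 - b * ρ)))) (hp : 0 ≤ p) :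
    (if pZ ≤ p then
        (p - pZ) * Real.sqrt (2 * (1 - b * ρ) / ((γ + 1) * ρ) /
          (p + (γ - 1) / (γ + 1) * pZ))
      else
        2 * a * (1 - b * ρ) / (γ - 1) * ((p / pZ) ^ ((γ - 1) / (2 * γ)) - 1)) ≤
    a * Real.sqrt (1 + (γ + 1) / (2 * γ) * max ((p - pZ) / pZ) 0) -
      (if γ ≤ 3 then 2 * Real.sqrt (2 * (γ - 1)) / (γ + 1) else 1) * a := by
  have ha0 : 0 ≤ a := ha ▸ Real.sqrt_nonneg _
  have hγ0 : (0:ℝ) < γ := by linarith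
  have hγ1 : (0:ℝ) < γ + 1 := by linarith
  have hc1 : (if γ ≤ 3 then 2 * Real.sqrt (2 * (γ - 1)) / (γ + 1) else 1) ≤ 1 := by
    have h1 := clemma γ 1 hγ le_rfl
    have h2 : ((γ - 1) * 1 ^ 2 + 2) / ((γ + 1) * 1) = 1 := by
      rw [div_eq_one_iff_eq (by linarith)]; ring
    rw [h2] at h1
    exact h1
  by_cases hps : pZ ≤ p
  · -- shock branch
    rw [if_pos hps]
    have hp0 : 0 < p := lt_of_lt_of_le hpZ hps
    have hq : 0 ≤ p - pZ := by linarith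
    have hmax : max ((p - pZ) / pZ) 0 = (p - pZ) / pZ :=
      max_eq_left (div_nonneg hq hpZ.le)
    rw [hmax]
    have hX0 : 0 ≤ (γ + 1) / (2 * γ) * ((p - pZ) / pZ) :=
      mul_nonneg (div_nonneg hγ1.le (by linarith)) (div_nonneg hq hpZ.le)
    set X := (γ + 1) / (2 * γ) * ((p - pZ) / pZ) with hX
    have hw1 : (1:ℝ) ≤ 1 + X := by linarith
    set s := Real.sqrt (1 + X) with hsdef
    have hs1 : 1 ≤ s := by
      have h := Real.sqrt_le_sqrt hw1
      rwa [Real.sqrt_one] at h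
    have hs0 : 0 < s := by linarith
    have hs2 : s ^ 2 = 1 + X := Real.sq_sqrt (by linarith)
    have hs2' : s ^ 2 - 1 = X := by rw [hs2]; ring
    have ha2 : a ^ 2 = γ * pZ / (ρ * (1 - b * ρ)) := by
      rw [ha]
      exact Real.sq_sqrt (le_of_lt (div_pos (mul_pos hγ0 hpZ) (mul_pos hρ hcov0)))
    have hβ : 0 < (γ - 1) / (γ + 1) * pZ := mul_pos (div_pos (by linarith) hγ1) hpZ
    have hD : 0 < p + (γ - 1) / (γ + 1) * pZ := by linarith
    have hAD : 0 ≤ 2 * (1 - b * ρ) / ((γ + 1) * ρ) / (p + (γ - 1) / (γ + 1) * pZ) :=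
      le_of_lt (div_pos (div_pos (by linarith) (mul_pos hγ1 hρ)) hD)
    have hG0 : 0 ≤ a * (2 * (s ^ 2 - 1) / ((γ + 1) * s)) :=
      mul_nonneg ha0 (div_nonneg (by nlinarith) (le_of_lt (mul_pos hγ1 hs0)))
    have hf0 : 0 ≤ (p - pZ) * Real.sqrt (2 * (1 - b * ρ) / ((γ + 1) * ρ) /
        (p + (γ - 1) / (γ + 1) * pZ)) := mul_nonneg hq (Real.sqrt_nonneg _)
    have hsqeq : ((p - pZ) * Real.sqrt (2 * (1 - b * ρ) / ((γ + 1) * ρ) /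
        (p + (γ - 1) / (γ + 1) * pZ))) ^ 2 =
        (1 - b * ρ) ^ 2 * (a * (2 * (s ^ 2 - 1) / ((γ + 1) * s))) ^ 2 := by
      have hρ' : ρ ≠ 0 := ne_of_gt hρ
      have hcov' : (1 - b * ρ) ≠ 0 := ne_of_gt hcov0
      have hpZ' : pZ ≠ 0 := ne_of_gt hpZ
      have hγ1' : γ + 1 ≠ 0 := ne_of_gt hγ1
      have hγ0' : γ ≠ 0 := ne_of_gt hγ0
      have hS : (0:ℝ) < (γ + 1) * p + (γ - 1) * pZ := by nlinarith
      have e1 : (a * (2 * (s ^ 2 - 1) / ((γ + 1) * s))) ^ 2 =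
          a ^ 2 * (2 * X) ^ 2 / ((γ + 1) ^ 2 * (1 + X)) := by
        rw [mul_pow, div_pow, mul_pow, mul_pow, hs2', hs2]; ring
      have hw2 : (1:ℝ) + (γ + 1) / (2 * γ) * ((p - pZ) / pZ) =
          ((γ + 1) * p + (γ - 1) * pZ) / (2 * γ * pZ) := by
        field_simp; ring
      have hD2 : p + (γ - 1) / (γ + 1) * pZ =
          ((γ + 1) * p + (γ - 1) * pZ) / (γ + 1) := by
        field_simp
      rw [mul_pow, Real.sq_sqrt hAD, e1, ha2, hX, hw2, hD2]
      field_simp [ne_of_gt hS]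
    have hsqle : ((p - pZ) * Real.sqrt (2 * (1 - b * ρ) / ((γ + 1) * ρ) /
        (p + (γ - 1) / (γ + 1) * pZ))) ^ 2 ≤
        (a * (2 * (s ^ 2 - 1) / ((γ + 1) * s))) ^ 2 := by
      rw [hsqeq]
      have he2 : (1 - b * ρ) ^ 2 ≤ 1 := by nlinarith
      nlinarith [sq_nonneg (a * (2 * (s ^ 2 - 1) / ((γ + 1) * s))), he2]
    have hfG : (p - pZ) * Real.sqrt (2 * (1 - b * ρ) / ((γ + 1) * ρ) /
        (p + (γ - 1) / (γ + 1) * pZ)) ≤ a * (2 * (s ^ 2 - 1) / ((γ + 1) * s)) := by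
      calc (p - pZ) * Real.sqrt (2 * (1 - b * ρ) / ((γ + 1) * ρ) /
          (p + (γ - 1) / (γ + 1) * pZ))
          = Real.sqrt (((p - pZ) * Real.sqrt (2 * (1 - b * ρ) / ((γ + 1) * ρ) /
            (p + (γ - 1) / (γ + 1) * pZ))) ^ 2) := (Real.sqrt_sq hf0).symm
        _ ≤ Real.sqrt ((a * (2 * (s ^ 2 - 1) / ((γ + 1) * s))) ^ 2) :=
            Real.sqrt_le_sqrt hsqle
        _ = a * (2 * (s ^ 2 - 1) / ((γ + 1) * s)) := Real.sqrt_sq hG0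
    have hms := clemma γ s hγ hs1
    have hca : (if γ ≤ 3 then 2 * Real.sqrt (2 * (γ - 1)) / (γ + 1) else 1) * a ≤
        (((γ - 1) * s ^ 2 + 2) / ((γ + 1) * s)) * a :=
      mul_le_mul_of_nonneg_right hms ha0
    have e2 : a * s - (((γ - 1) * s ^ 2 + 2) / ((γ + 1) * s)) * a =
        a * (2 * (s ^ 2 - 1) / ((γ + 1) * s)) := by
      have hs' : s ≠ 0 := ne_of_gt hs0
      have hγ1' : γ + 1 ≠ 0 := ne_of_gt hγ1
      field_simp
      ring
    linarith [hfG, hca, e2]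
  · -- rarefaction branch
    rw [if_neg hps]
    have hplt : p < pZ := not_le.1 hps
    have hmax : max ((p - pZ) / pZ) 0 = 0 :=
      max_eq_right (div_nonpos_of_nonpos_of_nonneg (by linarith) (le_of_lt hpZ))
    rw [hmax, mul_zero, add_zero, Real.sqrt_one]
    have hr : (p / pZ) ^ ((γ - 1) / (2 * γ)) ≤ 1 :=
      Real.rpow_le_one (div_nonneg hp hpZ.le) (by rw [div_le_one hpZ]; linarith)
        (div_nonneg (by linarith) (by linarith))
    have hf0 : 2 * a * (1 - b * ρ) / (γ - 1) * ((p / pZ) ^ ((γ - 1) / (2 * γ)) - 1) ≤ 0 :=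
      mul_nonpos_of_nonneg_of_nonpos
        (div_nonneg (mul_nonneg (by linarith) hcov0.le) (by linarith)) (by linarith)
    nlinarith [mul_nonneg (sub_nonneg.2 hc1) ha0]

theorem stmt_11 (γ b ρL ρR uL uR pL pR aL aR pstar : ℝ) (φ : ℝ → ℝ)
    (hγ : 1 < γ) (hb : 0 ≤ b)
    (hρL : 0 < ρL) (hρR : 0 < ρR) (hpL : 0 < pL) (hpR : 0 < pR)
    (hcovL0 : 0 < 1 - b * ρL) (hcovL1 : 1 - b * ρL < 1)
    (hcovR0 : 0 < 1 - b * ρR) (hcovR1 : 1 - b * ρR < 1)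
    (haL : aL = Real.sqrt (γ * pL / (ρL * (1 - b * ρL))))
    (haR : aR = Real.sqrt (γ * pR / (ρR * (1 - b * ρR))))
    (hφ : ∀ p, φ p =
      (if pL ≤ p then
          (p - pL) * Real.sqrt (2 * (1 - b * ρL) / ((γ + 1) * ρL) /
            (p + (γ - 1) / (γ + 1) * pL))
        else
          2 * aL * (1 - b * ρL) / (γ - 1) * ((p / pL) ^ ((γ - 1) / (2 * γ)) - 1)) +
      (if pR ≤ p then
          (p - pR) * Real.sqrt (2 * (1 - b * ρR) / ((γ + 1) * ρR) /
            (p + (γ - 1) / (γ + 1) * pR))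
        else
          2 * aR * (1 - b * ρR) / (γ - 1) * ((p / pR) ^ ((γ - 1) / (2 * γ)) - 1)) +
      uR - uL)
    (hpstar : 0 ≤ pstar)
    (hroot : φ pstar = 0 ∨ (pstar = 0 ∧ 0 ≤ φ 0)) :
    (uR + aR * Real.sqrt (1 + (γ + 1) / (2 * γ) * max ((pstar - pR) / pR) 0)) -
      (uL - aL * Real.sqrt (1 + (γ + 1) / (2 * γ) * max ((pstar - pL) / pL) 0)) ≥
      (if γ ≤ 3 then 2 * Real.sqrt (2 * (γ - 1)) / (γ + 1) else 1) * (aL + aR) := by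
  have hφ0 : 0 ≤ φ pstar := by
    rcases hroot with h | ⟨h0, h⟩
    · exact h.ge
    · rw [h0]; exact h
  rw [hφ pstar] at hφ0
  have hL := perstate γ b ρL pL aL pstar hγ hρL hpL hcovL0 hcovL1 haL hpstar
  have hR := perstate γ b ρR pR aR pstar hγ hρR hpR hcovR0 hcovR1 haR hpstar
  set C := if γ ≤ 3 then 2 * Real.sqrt (2 * (γ - 1)) / (γ + 1) else 1 with hC
  have hdist : C * (aL + aR) = C * aL + C * aR := by ring
  linarith
end

section
/- Two-rarefaction approximation overestimates: Assume 1 < γ ≤ 5/3 and φ(p_min) < 0, where φ(p) = f(p,L) + f(p,R) + u_R − u_L is the pressure function of the Riemann problem and φ_R(p) is obtained by using the rarefaction branch for both states. Then the unique root p̃* of φ_R satisfies p* < p̃*, where p* is the unique root of φ. -/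
open Real Set

lemma deriv_shift_rpow (μ c : ℝ) {s : ℝ} (hs : 0 < s + μ) :
    HasDerivAt (fun x : ℝ => (x + μ) ^ c) (c * (s + μ) ^ (c - 1)) s := by
  have h1 : HasDerivAt (fun x : ℝ => x + μ) 1 s := (hasDerivAt_id s).add_const μ
  have := h1.rpow_const (p := c) (Or.inl (ne_of_gt hs))
  simpa using this.congr_deriv (by ring)

-- main analytic inequality, abstract form in μ β
set_option maxHeartbeats 1000000 in
lemma Gpos {μ β : ℝ} (hμ0 : 0 < μ) (hμ4 : μ ≤ 1/4) (hβμ : β * (1 + μ) = 1)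
    {t : ℝ} (ht : 1 < t) :
    (t + μ) ^ ((3:ℝ)/2) * t ^ (-β) < (1+μ) ^ ((1:ℝ)/2) * (t + 1 + 2*μ) / 2 := by
  have hβl : (1:ℝ)/2 < β := by nlinarith
  have hβu : β < 1 := by nlinarith
  set G : ℝ → ℝ := fun s => (1+μ) ^ ((1:ℝ)/2) * (s + 1 + 2*μ) / 2 - (s+μ) ^ ((3:ℝ)/2) * s ^ (-β) with hGdef
  set G1 : ℝ → ℝ := fun s => (1+μ) ^ ((1:ℝ)/2) / 2 - (3/2) * (s+μ) ^ ((1:ℝ)/2) * s ^ (-β)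
      + β * (s+μ) ^ ((3:ℝ)/2) * s ^ (-β-1) with hG1def
  set G2 : ℝ → ℝ := fun s => -(3/4) * (s+μ) ^ (-(1:ℝ)/2) * s ^ (-β) + 3*β*(s+μ) ^ ((1:ℝ)/2) * s ^ (-β-1)
      - β*(β+1)*(s+μ) ^ ((3:ℝ)/2) * s ^ (-β-2) with hG2def
  have hsm : ∀ s : ℝ, 0 < s → 0 < s + μ := fun s hs => by linarith
  have hG : ∀ s : ℝ, 0 < s → HasDerivAt G (G1 s) s := by
    intro s hs
    have h1 : HasDerivAt (fun x : ℝ => (1+μ) ^ ((1:ℝ)/2) * (x + 1 + 2*μ) / 2)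
        ((1+μ) ^ ((1:ℝ)/2) / 2) s := by
      have base : HasDerivAt (fun x : ℝ => (1+μ) ^ ((1:ℝ)/2)/2 * x + (1+μ) ^ ((1:ℝ)/2)*(1+2*μ)/2)
          ((1+μ) ^ ((1:ℝ)/2) / 2) s := by
        simpa using ((hasDerivAt_id s).const_mul ((1+μ) ^ ((1:ℝ)/2)/2)).add_const
          ((1+μ) ^ ((1:ℝ)/2)*(1+2*μ)/2)
      exact base.congr_of_eventuallyEq (Filter.Eventually.of_forall fun x => by ring)
    have h2 : HasDerivAt (fun x : ℝ => (x+μ) ^ ((3:ℝ)/2)) ((3/2) * (s+μ) ^ ((1:ℝ)/2)) s := by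
      have := deriv_shift_rpow μ ((3:ℝ)/2) (hsm s hs)
      convert this using 2 <;> norm_num
    have h3 : HasDerivAt (fun x : ℝ => x ^ (-β)) ((-β) * s ^ (-β-1)) s := by
      have := Real.hasDerivAt_rpow_const (x := s) (p := -β) (Or.inl (ne_of_gt hs))
      convert this using 2 <;> ring
    have := h1.sub (h2.mul h3)
    apply this.congr_deriv
    simp only [hG1def]; ring
  have hG1 : ∀ s : ℝ, 0 < s → HasDerivAt G1 (G2 s) s := by
    intro s hs
    have h2 : HasDerivAt (fun x : ℝ => (x+μ) ^ ((1:ℝ)/2)) ((1/2) * (s+μ) ^ (-(1:ℝ)/2)) s := by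
      have := deriv_shift_rpow μ ((1:ℝ)/2) (hsm s hs)
      convert this using 2 <;> norm_num
    have h3 : HasDerivAt (fun x : ℝ => x ^ (-β)) ((-β) * s ^ (-β-1)) s := by
      have := Real.hasDerivAt_rpow_const (x := s) (p := -β) (Or.inl (ne_of_gt hs))
      convert this using 2 <;> ring
    have h4 : HasDerivAt (fun x : ℝ => (x+μ) ^ ((3:ℝ)/2)) ((3/2) * (s+μ) ^ ((1:ℝ)/2)) s := by
      have := deriv_shift_rpow μ ((3:ℝ)/2) (hsm s hs)
      convert this using 2 <;> norm_num
    have h5 : HasDerivAt (fun x : ℝ => x ^ (-β-1)) ((-β-1) * s ^ (-β-2)) s := by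
      have := Real.hasDerivAt_rpow_const (x := s) (p := -β-1) (Or.inl (ne_of_gt hs))
      convert this using 2 <;> ring
    have hA : HasDerivAt (fun x : ℝ => (3/2 : ℝ) * (x+μ) ^ ((1:ℝ)/2) * x ^ (-β))
        ((3/2) * ((1/2) * (s+μ) ^ (-(1:ℝ)/2) * s ^ (-β) + (s+μ) ^ ((1:ℝ)/2) * ((-β) * s ^ (-β-1)))) s := by
      have := ((h2.mul h3).const_mul (3/2 : ℝ))
      refine (this.congr_deriv (by ring)).congr_of_eventuallyEq ?_
      filter_upwards with x; simp only [Pi.mul_apply]; ring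
    have hB : HasDerivAt (fun x : ℝ => β * (x+μ) ^ ((3:ℝ)/2) * x ^ (-β-1))
        (β * ((3/2) * (s+μ) ^ ((1:ℝ)/2) * s ^ (-β-1) + (s+μ) ^ ((3:ℝ)/2) * ((-β-1) * s ^ (-β-2)))) s := by
      have := ((h4.mul h5).const_mul β)
      refine (this.congr_deriv (by ring)).congr_of_eventuallyEq ?_
      filter_upwards with x; simp only [Pi.mul_apply]; ring
    have := ((hasDerivAt_const s ((1+μ) ^ ((1:ℝ)/2) / 2)).sub hA).add hB
    apply this.congr_deriv
    simp only [hG2def]; ring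
  -- positivity of G2 on (1,∞)
  have h1μ : (0:ℝ) < 1 + μ := by linarith
  have hG2pos : ∀ s : ℝ, 1 < s → 0 < G2 s := by
    intro s hs1
    have hs : 0 < s := lt_trans one_pos hs1
    have hsμ : 0 < s + μ := hsm s hs
    have hP : (0:ℝ) < (s+μ) ^ (-(1:ℝ)/2) := Real.rpow_pos_of_pos hsμ _
    have hQ : (0:ℝ) < s ^ (-β-2) := Real.rpow_pos_of_pos hs _
    have e1 : (s+μ) ^ ((1:ℝ)/2) = (s+μ) * (s+μ) ^ (-(1:ℝ)/2) := by
      rw [show ((1:ℝ)/2) = 1 + (-(1:ℝ)/2) by norm_num, Real.rpow_add hsμ, Real.rpow_one]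
    have e3 : (s+μ) ^ ((3:ℝ)/2) = (s+μ) * ((s+μ) * (s+μ) ^ (-(1:ℝ)/2)) := by
      rw [show ((3:ℝ)/2) = 1 + (1 + (-(1:ℝ)/2)) by norm_num, Real.rpow_add hsμ,
        Real.rpow_add hsμ, Real.rpow_one]
    have e4 : s ^ (-β) = s * (s * s ^ (-β-2)) := by
      nth_rewrite 1 [show -β = 1 + (1 + (-β-2)) by ring]
      rw [Real.rpow_add hs, Real.rpow_add hs, Real.rpow_one]
    have e5 : s ^ (-β-1) = s * s ^ (-β-2) := by
      nth_rewrite 1 [show -β-1 = 1 + (-β-2) by ring]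
      rw [Real.rpow_add hs, Real.rpow_one]
    have key2 : 0 < -(3/4)*s^2*(1+μ)^2 + 3*s*(s+μ)*(1+μ) - (2+μ)*(s+μ)^2 := by
      nlinarith [mul_nonneg (by linarith : (0:ℝ) ≤ 1/4 - μ) (sq_nonneg (1+μ)),
        mul_pos (sub_pos.2 hs1) (by nlinarith : (0:ℝ) < (1 - μ^2)/2),
        mul_nonneg (by nlinarith : (0:ℝ) ≤ (1-μ)*(1+3*μ)/4) (sq_nonneg (s-1))]
    have hR : 0 < -(3/4)*s^2 + 3*β*s*(s+μ) - β*(β+1)*(s+μ)^2 := by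
      have e : (-(3/4)*s^2 + 3*β*s*(s+μ) - β*(β+1)*(s+μ)^2) * ((1+μ)^2)
          = -(3/4)*s^2*(1+μ)^2 + 3*s*(s+μ)*(1+μ) - (2+μ)*(s+μ)^2 := by
        linear_combination (3*s*(s+μ)*(1+μ) - (s+μ)^2*(β*(1+μ)+2+μ)) * hβμ
      nlinarith [key2, e, sq_nonneg (1+μ)]
    have hfact : G2 s = ((s+μ) ^ (-(1:ℝ)/2) * s ^ (-β-2)) *
        (-(3/4)*s^2 + 3*β*s*(s+μ) - β*(β+1)*(s+μ)^2) := by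
      simp only [hG2def]
      rw [e1, e3, e4, e5]; ring
    rw [hfact]
    exact mul_pos (mul_pos hP hQ) hR
  have hG1at1 : G1 1 = 0 := by
    simp only [hG1def]
    rw [show ((3:ℝ)/2) = (1:ℝ)/2 + 1 by norm_num, Real.rpow_add h1μ, Real.rpow_one]
    simp only [Real.one_rpow, mul_one]
    linear_combination ((1+μ) ^ ((1:ℝ)/2)) * hβμ
  have hGat1 : G 1 = 0 := by
    simp only [hGdef]
    rw [show ((3:ℝ)/2) = (1:ℝ)/2 + 1 by norm_num, Real.rpow_add h1μ, Real.rpow_one]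
    simp only [Real.one_rpow, mul_one]
    ring
  have hcontG1 : ContinuousOn G1 (Ici (1:ℝ)) := fun x hx =>
    ((hG1 x (lt_of_lt_of_le one_pos hx)).continuousAt).continuousWithinAt
  have hmonoG1 : StrictMonoOn G1 (Ici (1:ℝ)) := by
    refine strictMonoOn_of_deriv_pos (convex_Ici 1) hcontG1 ?_
    intro x hx
    rw [interior_Ici] at hx
    rw [(hG1 x (lt_trans one_pos hx)).deriv]
    exact hG2pos x hx
  have hG1pos : ∀ s : ℝ, 1 < s → 0 < G1 s := by
    intro s hs
    have := hmonoG1 (self_mem_Ici) (le_of_lt hs) hs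
    rwa [hG1at1] at this
  have hcontG : ContinuousOn G (Ici (1:ℝ)) := fun x hx =>
    ((hG x (lt_of_lt_of_le one_pos hx)).continuousAt).continuousWithinAt
  have hmonoG : StrictMonoOn G (Ici (1:ℝ)) := by
    refine strictMonoOn_of_deriv_pos (convex_Ici 1) hcontG ?_
    intro x hx
    rw [interior_Ici] at hx
    rw [(hG x (lt_trans one_pos hx)).deriv]
    exact hG1pos x hx
  have hGt : 0 < G t := by
    have := hmonoG (self_mem_Ici) (le_of_lt ht) ht
    rwa [hGat1] at this
  simp only [hGdef] at hGt
  linarith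

set_option maxHeartbeats 1000000 in
lemma hpos {μ β θ : ℝ} (hμ0 : 0 < μ) (hμ4 : μ ≤ 1/4) (hβμ : β * (1 + μ) = 1)
    (hθβ : θ = 1 - β) (hθ0 : 0 < θ) {t : ℝ} (ht : 1 < t) :
    (1/θ) * (t ^ θ - 1) < (t - 1) * ((1+μ) ^ ((1:ℝ)/2) * (t+μ) ^ (-(1:ℝ)/2)) := by
  have h1μ : (0:ℝ) < 1 + μ := by linarith
  set h : ℝ → ℝ := fun s => (s - 1) * ((1+μ) ^ ((1:ℝ)/2) * (s+μ) ^ (-(1:ℝ)/2))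
      - (1/θ) * (s ^ θ - 1) with hhdef
  set h1 : ℝ → ℝ := fun s => (1+μ) ^ ((1:ℝ)/2) * (s+μ) ^ (-(1:ℝ)/2)
      - (1+μ) ^ ((1:ℝ)/2) * (s-1) / 2 * (s+μ) ^ (-(3:ℝ)/2) - s ^ (θ-1) with hh1def
  have hsm : ∀ s : ℝ, 0 < s → 0 < s + μ := fun s hs => by linarith
  have hθne : θ ≠ 0 := ne_of_gt hθ0
  have hh : ∀ s : ℝ, 0 < s → HasDerivAt h (h1 s) s := by
    intro s hs
    have hsμ := hsm s hs
    have hA : HasDerivAt (fun x : ℝ => x - 1) 1 s := (hasDerivAt_id s).sub_const 1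
    have hB : HasDerivAt (fun x : ℝ => (1+μ) ^ ((1:ℝ)/2) * (x+μ) ^ (-(1:ℝ)/2))
        ((1+μ) ^ ((1:ℝ)/2) * ((-(1:ℝ)/2) * (s+μ) ^ (-(3:ℝ)/2))) s := by
      have := (deriv_shift_rpow μ (-(1:ℝ)/2) hsμ).const_mul ((1+μ) ^ ((1:ℝ)/2))
      rw [show (-(1:ℝ)/2 - 1) = -(3:ℝ)/2 by norm_num] at this
      exact this
    have hC : HasDerivAt (fun x : ℝ => (1/θ) * (x ^ θ - 1)) ((1/θ) * (θ * s ^ (θ-1))) s := by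
      have := ((Real.hasDerivAt_rpow_const (x := s) (p := θ)
        (Or.inl (ne_of_gt hs))).sub_const 1).const_mul (1/θ)
      exact this
    have := (hA.mul hB).sub hC
    apply this.congr_deriv
    simp only [hh1def]
    field_simp
    ring
  have hh1pos : ∀ s : ℝ, 1 < s → 0 < h1 s := by
    intro s hs1
    have hs : 0 < s := lt_trans one_pos hs1
    have hsμ := hsm s hs
    have hG := Gpos hμ0 hμ4 hβμ hs1
    have hX : (0:ℝ) < (s+μ) ^ (-(3:ℝ)/2) := Real.rpow_pos_of_pos hsμ _
    have e1 : (s+μ) ^ (-(1:ℝ)/2) = (s+μ) * (s+μ) ^ (-(3:ℝ)/2) := by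
      rw [show (-(1:ℝ)/2) = 1 + (-(3:ℝ)/2) by norm_num, Real.rpow_add hsμ, Real.rpow_one]
    have e2 : (s+μ) ^ (-(3:ℝ)/2) * (s+μ) ^ ((3:ℝ)/2) = 1 := by
      rw [← Real.rpow_add hsμ]; norm_num
    have e3 : s ^ (θ-1) = s ^ (-β) := by rw [show θ-1 = -β by linarith]
    have hfact : h1 s = (s+μ) ^ (-(3:ℝ)/2) *
        ((1+μ) ^ ((1:ℝ)/2) * (s + 1 + 2*μ) / 2 - (s+μ) ^ ((3:ℝ)/2) * s ^ (-β)) := by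
      simp only [hh1def]
      rw [e1, e3]
      linear_combination (s ^ (-β)) * e2
    rw [hfact]
    exact mul_pos hX (by linarith)
  have hhat1 : h 1 = 0 := by
    simp only [hhdef, Real.one_rpow]
    ring
  have hcont : ContinuousOn h (Ici (1:ℝ)) := fun x hx =>
    ((hh x (lt_of_lt_of_le one_pos hx)).continuousAt).continuousWithinAt
  have hmono : StrictMonoOn h (Ici (1:ℝ)) := by
    refine strictMonoOn_of_deriv_pos (convex_Ici 1) hcont ?_
    intro x hx
    rw [interior_Ici] at hx
    rw [(hh x (lt_trans one_pos hx)).deriv]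
    exact hh1pos x hx
  have hht : 0 < h t := by
    have := hmono (self_mem_Ici) (le_of_lt ht) ht
    rwa [hhat1] at this
  simp only [hhdef] at hht
  linarith

lemma core (γ : ℝ) (hγ1 : 1 < γ) (hγ2 : γ ≤ 5/3) {t : ℝ} (ht : 1 < t) :
    2*γ/(γ-1) * (t ^ ((γ-1)/(2*γ)) - 1)
      < (t-1) * Real.sqrt ((2*γ/(γ+1)) / (t + (γ-1)/(γ+1))) := by
  have hγ0 : (0:ℝ) < γ := by linarith
  have hγ1' : (0:ℝ) < γ + 1 := by linarith
  have hγm : (0:ℝ) < γ - 1 := by linarith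
  set μ : ℝ := (γ-1)/(γ+1) with hμdef
  set β : ℝ := (γ+1)/(2*γ) with hβdef
  set θ : ℝ := (γ-1)/(2*γ) with hθdef
  have hμ0 : 0 < μ := div_pos hγm hγ1'
  have hμ4 : μ ≤ 1/4 := by rw [hμdef, div_le_iff₀ hγ1']; linarith
  have hβμ : β * (1 + μ) = 1 := by rw [hβdef, hμdef]; field_simp; ring
  have hθβ : θ = 1 - β := by rw [hθdef, hβdef]; field_simp; ring
  have hθ0 : 0 < θ := div_pos hγm (by linarith)
  have htμ : (0:ℝ) < t + μ := by linarith
  have h1μ : (0:ℝ) < 1 + μ := by linarith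
  have e1 : 2*γ/(γ+1) = 1 + μ := by rw [hμdef]; field_simp; ring
  have e2 : 2*γ/(γ-1) = 1/θ := by rw [hθdef]; field_simp
  have e3 : Real.sqrt ((1+μ)/(t+μ)) = (1+μ) ^ ((1:ℝ)/2) * (t+μ) ^ (-(1:ℝ)/2) := by
    rw [show (-(1:ℝ)/2) = -((1:ℝ)/2) by norm_num, Real.rpow_neg htμ.le,
      Real.sqrt_eq_rpow, Real.div_rpow h1μ.le htμ.le, div_eq_mul_inv]
  rw [e1, e2, e3]
  exact hpos hμ0 hμ4 hβμ hθβ hθ0 ht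

set_option maxHeartbeats 1000000 in
lemma raref_lt_shock (γ b ρ pZ a p : ℝ) (hγ1 : 1 < γ) (hγ2 : γ ≤ 5/3)
    (hρ : 0 < ρ) (hpZ : 0 < pZ) (hcov : 0 < 1 - b * ρ)
    (ha : a = Real.sqrt (γ * pZ / (ρ * (1 - b * ρ)))) (hp : pZ < p) :
    2 * a * (1 - b * ρ) / (γ - 1) * ((p / pZ) ^ ((γ - 1) / (2 * γ)) - 1)
      < (p - pZ) * Real.sqrt (2 * (1 - b * ρ) / ((γ + 1) * ρ) /
          (p + (γ - 1) / (γ + 1) * pZ)) := by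
  have hγ0 : (0:ℝ) < γ := by linarith
  have hγ1' : (0:ℝ) < γ + 1 := by linarith
  set cov : ℝ := 1 - b * ρ with hcovdef
  set t : ℝ := p / pZ with htdef
  have ht : 1 < t := (one_lt_div hpZ).2 hp
  set K : ℝ := Real.sqrt (cov * pZ / (γ * ρ)) with hKdef
  have hKarg : 0 < cov * pZ / (γ * ρ) := by positivity
  have hK0 : 0 < K := Real.sqrt_pos.2 hKarg
  have hK2 : K ^ 2 = cov * pZ / (γ * ρ) := Real.sq_sqrt hKarg.le
  have hμpos : 0 < (γ-1)/(γ+1) := div_pos (by linarith) hγ1'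
  have htμ : 0 < t + (γ-1)/(γ+1) := by linarith
  have hpμ : 0 < p + (γ-1)/(γ+1) * pZ := by nlinarith [mul_pos hμpos hpZ, hpZ.trans hp]
  -- a * cov = γ * K
  have hA : 0 < γ * pZ / (ρ * cov) := div_pos (mul_pos hγ0 hpZ) (mul_pos hρ hcov)
  have haK : a * cov = γ * K := by
    calc a * cov = Real.sqrt (γ * pZ / (ρ * cov) * cov ^ 2) := by
          rw [ha, Real.sqrt_mul hA.le, Real.sqrt_sq hcov.le]
      _ = Real.sqrt (γ ^ 2 * (cov * pZ / (γ * ρ))) := by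
          congr 1
          field_simp
      _ = γ * K := by rw [Real.sqrt_mul (sq_nonneg γ), Real.sqrt_sq hγ0.le, hKdef]
  have hsq : Real.sqrt (2 * cov / ((γ + 1) * ρ) / (p + (γ - 1) / (γ + 1) * pZ))
      = (K / pZ) * Real.sqrt ((2*γ/(γ+1)) / (t + (γ-1)/(γ+1))) := by
    rw [show 2 * cov / ((γ + 1) * ρ) / (p + (γ - 1) / (γ + 1) * pZ)
        = (K / pZ) ^ 2 * ((2*γ/(γ+1)) / (t + (γ-1)/(γ+1))) by
          rw [show (K / pZ) ^ 2 * ((2*γ/(γ+1)) / (t + (γ-1)/(γ+1)))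
              = ((K / pZ) ^ 2 * (2*γ/(γ+1))) / (t + (γ-1)/(γ+1)) from
            (mul_div_assoc _ _ _).symm]
          rw [div_eq_div_iff hpμ.ne' htμ.ne', div_pow, hK2, htdef]
          field_simp [hρ.ne', hpZ.ne', hγ0.ne', hγ1'.ne']]
    rw [Real.sqrt_mul (sq_nonneg _), Real.sqrt_sq (div_nonneg hK0.le hpZ.le)]
  have hcore := core γ hγ1 hγ2 ht
  have hmul := mul_lt_mul_of_pos_left hcore hK0
  have lhs_eq : 2 * a * cov / (γ - 1) * ((p / pZ) ^ ((γ - 1) / (2 * γ)) - 1)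
      = K * (2*γ/(γ-1) * (t ^ ((γ-1)/(2*γ)) - 1)) := by
    rw [htdef]
    linear_combination (2 * ((p/pZ) ^ ((γ-1)/(2*γ)) - 1) / (γ-1)) * haK
  have rhs_eq : (p - pZ) * Real.sqrt (2 * cov / ((γ + 1) * ρ) /
        (p + (γ - 1) / (γ + 1) * pZ))
      = K * ((t-1) * Real.sqrt ((2*γ/(γ+1)) / (t + (γ-1)/(γ+1)))) := by
    rw [hsq, htdef]
    field_simp
  rw [lhs_eq, rhs_eq]
  exact hmul

lemma raref_le_shock (γ b ρ pZ a p : ℝ) (hγ1 : 1 < γ) (hγ2 : γ ≤ 5/3)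
    (hρ : 0 < ρ) (hpZ : 0 < pZ) (hcov : 0 < 1 - b * ρ)
    (ha : a = Real.sqrt (γ * pZ / (ρ * (1 - b * ρ)))) (hp : pZ ≤ p) :
    2 * a * (1 - b * ρ) / (γ - 1) * ((p / pZ) ^ ((γ - 1) / (2 * γ)) - 1)
      ≤ (p - pZ) * Real.sqrt (2 * (1 - b * ρ) / ((γ + 1) * ρ) /
          (p + (γ - 1) / (γ + 1) * pZ)) := by
  rcases eq_or_lt_of_le hp with heq | hlt
  · rw [← heq]
    simp [div_self hpZ.ne', Real.one_rpow]
  · exact (raref_lt_shock γ b ρ pZ a p hγ1 hγ2 hρ hpZ hcov ha hlt).le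

theorem stmt_15 (γ b ρL ρR uL uR pL pR aL aR pstar ptilde : ℝ) (φ φR : ℝ → ℝ)
    (hγ1 : 1 < γ) (hγ2 : γ ≤ 5/3) (hb : 0 ≤ b)
    (hρL : 0 < ρL) (hρR : 0 < ρR) (hpL : 0 < pL) (hpR : 0 < pR)
    (hcovL0 : 0 < 1 - b * ρL) (hcovL1 : 1 - b * ρL < 1)
    (hcovR0 : 0 < 1 - b * ρR) (hcovR1 : 1 - b * ρR < 1)
    (haL : aL = Real.sqrt (γ * pL / (ρL * (1 - b * ρL))))
    (haR : aR = Real.sqrt (γ * pR / (ρR * (1 - b * ρR))))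
    (hφ : ∀ p, φ p =
      (if pL ≤ p then
          (p - pL) * Real.sqrt (2 * (1 - b * ρL) / ((γ + 1) * ρL) /
            (p + (γ - 1) / (γ + 1) * pL))
        else
          2 * aL * (1 - b * ρL) / (γ - 1) * ((p / pL) ^ ((γ - 1) / (2 * γ)) - 1)) +
      (if pR ≤ p then
          (p - pR) * Real.sqrt (2 * (1 - b * ρR) / ((γ + 1) * ρR) /
            (p + (γ - 1) / (γ + 1) * pR))
        else
          2 * aR * (1 - b * ρR) / (γ - 1) * ((p / pR) ^ ((γ - 1) / (2 * γ)) - 1)) +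
      uR - uL)
    (hφR : ∀ p, φR p =
      2 * aL * (1 - b * ρL) / (γ - 1) * ((p / pL) ^ ((γ - 1) / (2 * γ)) - 1) +
      2 * aR * (1 - b * ρR) / (γ - 1) * ((p / pR) ^ ((γ - 1) / (2 * γ)) - 1) +
      uR - uL)
    (hmin : φ (min pL pR) < 0)
    (hpstar : 0 < pstar) (hpstar0 : φ pstar = 0)
    (hptilde : 0 < ptilde) (hptilde0 : φR ptilde = 0) :
    pstar < ptilde := by
  have hγ0 : (0:ℝ) < γ := by linarith
  have hγm : (0:ℝ) < γ - 1 := by linarith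
  have hθ0 : 0 < (γ-1)/(2*γ) := div_pos hγm (by linarith)
  have haL0 : 0 < aL := by
    rw [haL]; exact Real.sqrt_pos.2 (div_pos (mul_pos hγ0 hpL) (mul_pos hρL hcovL0))
  have haR0 : 0 < aR := by
    rw [haR]; exact Real.sqrt_pos.2 (div_pos (mul_pos hγ0 hpR) (mul_pos hρR hcovR0))
  have hcL : 0 < 2 * aL * (1 - b * ρL) / (γ - 1) := by positivity
  have hcR : 0 < 2 * aR * (1 - b * ρR) / (γ - 1) := by positivity
  -- strict monotonicity of φR on positives
  have hmono : ∀ x y : ℝ, 0 < x → x < y → φR x < φR y := by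
    intro x y hx hxy
    rw [hφR x, hφR y]
    have h1 : (x / pL) ^ ((γ - 1) / (2 * γ)) < (y / pL) ^ ((γ - 1) / (2 * γ)) :=
      Real.rpow_lt_rpow (by positivity) (by gcongr) hθ0
    have h2 : (x / pR) ^ ((γ - 1) / (2 * γ)) < (y / pR) ^ ((γ - 1) / (2 * γ)) :=
      Real.rpow_lt_rpow (by positivity) (by gcongr) hθ0
    have := mul_lt_mul_of_pos_left h1 hcL
    have := mul_lt_mul_of_pos_left h2 hcR
    nlinarith [mul_lt_mul_of_pos_left h1 hcL, mul_lt_mul_of_pos_left h2 hcR]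
  -- φ and φR agree below both pressures
  have heqlow : ∀ p : ℝ, 0 < p → p ≤ pL → p ≤ pR → φ p = φR p := by
    intro p hp hpl hpr
    rw [hφ p, hφR p]
    have e1 : (if pL ≤ p then
          (p - pL) * Real.sqrt (2 * (1 - b * ρL) / ((γ + 1) * ρL) /
            (p + (γ - 1) / (γ + 1) * pL))
        else
          2 * aL * (1 - b * ρL) / (γ - 1) * ((p / pL) ^ ((γ - 1) / (2 * γ)) - 1))
        = 2 * aL * (1 - b * ρL) / (γ - 1) * ((p / pL) ^ ((γ - 1) / (2 * γ)) - 1) := by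
      split_ifs with h
      · have hep : p = pL := le_antisymm hpl h
        rw [hep]
        simp [div_self hpL.ne', Real.one_rpow]
      · rfl
    have e2 : (if pR ≤ p then
          (p - pR) * Real.sqrt (2 * (1 - b * ρR) / ((γ + 1) * ρR) /
            (p + (γ - 1) / (γ + 1) * pR))
        else
          2 * aR * (1 - b * ρR) / (γ - 1) * ((p / pR) ^ ((γ - 1) / (2 * γ)) - 1))
        = 2 * aR * (1 - b * ρR) / (γ - 1) * ((p / pR) ^ ((γ - 1) / (2 * γ)) - 1) := by
      split_ifs with h
      · have hep : p = pR := le_antisymm hpr h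
        rw [hep]
        simp [div_self hpR.ne', Real.one_rpow]
      · rfl
    rw [e1, e2]
  set m : ℝ := min pL pR with hmdef
  have hm0 : 0 < m := lt_min hpL hpR
  have hφRm : φR m < 0 := by
    rw [← heqlow m hm0 (min_le_left _ _) (min_le_right _ _)]
    exact hmin
  have hmlt : m < pstar := by
    by_contra hle
    push_neg at hle
    have heq : φ pstar = φR pstar :=
      heqlow pstar hpstar (le_trans hle (min_le_left _ _)) (le_trans hle (min_le_right _ _))
    have hneg : φR pstar < 0 := by
      rcases eq_or_lt_of_le hle with he | hl
      · rwa [he]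
      · exact lt_trans (hmono pstar m hpstar hl) hφRm
    rw [← heq] at hneg
    linarith
  -- φR pstar < φ pstar
  have hkey : φR pstar < φ pstar := by
    rw [hφ pstar, hφR pstar]
    have hLle : 2 * aL * (1 - b * ρL) / (γ - 1) * ((pstar / pL) ^ ((γ - 1) / (2 * γ)) - 1)
        ≤ (if pL ≤ pstar then
          (pstar - pL) * Real.sqrt (2 * (1 - b * ρL) / ((γ + 1) * ρL) /
            (pstar + (γ - 1) / (γ + 1) * pL))
        else
          2 * aL * (1 - b * ρL) / (γ - 1) * ((pstar / pL) ^ ((γ - 1) / (2 * γ)) - 1)) := by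
      split_ifs with h
      · exact raref_le_shock γ b ρL pL aL pstar hγ1 hγ2 hρL hpL hcovL0 haL h
      · exact le_refl _
    have hRle : 2 * aR * (1 - b * ρR) / (γ - 1) * ((pstar / pR) ^ ((γ - 1) / (2 * γ)) - 1)
        ≤ (if pR ≤ pstar then
          (pstar - pR) * Real.sqrt (2 * (1 - b * ρR) / ((γ + 1) * ρR) /
            (pstar + (γ - 1) / (γ + 1) * pR))
        else
          2 * aR * (1 - b * ρR) / (γ - 1) * ((pstar / pR) ^ ((γ - 1) / (2 * γ)) - 1)) := by
      split_ifs with h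
      · exact raref_le_shock γ b ρR pR aR pstar hγ1 hγ2 hρR hpR hcovR0 haR h
      · exact le_refl _
    rcases min_lt_iff.mp hmlt with h | h
    · have hLlt : 2 * aL * (1 - b * ρL) / (γ - 1) * ((pstar / pL) ^ ((γ - 1) / (2 * γ)) - 1)
          < (if pL ≤ pstar then
            (pstar - pL) * Real.sqrt (2 * (1 - b * ρL) / ((γ + 1) * ρL) /
              (pstar + (γ - 1) / (γ + 1) * pL))
          else
            2 * aL * (1 - b * ρL) / (γ - 1) * ((pstar / pL) ^ ((γ - 1) / (2 * γ)) - 1)) := by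
        rw [if_pos h.le]
        exact raref_lt_shock γ b ρL pL aL pstar hγ1 hγ2 hρL hpL hcovL0 haL h
      linarith
    · have hRlt : 2 * aR * (1 - b * ρR) / (γ - 1) * ((pstar / pR) ^ ((γ - 1) / (2 * γ)) - 1)
          < (if pR ≤ pstar then
            (pstar - pR) * Real.sqrt (2 * (1 - b * ρR) / ((γ + 1) * ρR) /
              (pstar + (γ - 1) / (γ + 1) * pR))
          else
            2 * aR * (1 - b * ρR) / (γ - 1) * ((pstar / pR) ^ ((γ - 1) / (2 * γ)) - 1)) := by
        rw [if_pos h.le]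
        exact raref_lt_shock γ b ρR pR aR pstar hγ1 hγ2 hρR hpR hcovR0 haR h
      linarith
  have hRstar : φR pstar < 0 := by rw [← hpstar0]; exact hkey
  by_contra hc
  push_neg at hc
  rcases eq_or_lt_of_le hc with he | hl
  · rw [he] at hptilde0; linarith
  · have := hmono ptilde pstar hptilde hl
    rw [hptilde0] at this
    linarith
end
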